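/- arXiv:2301.13541 — 9 statements merged into one kernel-verified Lean document; each statement's English description precedes it below -/
import Mathlib

section
/- Let A ∈ ℂ^{m×n}, let d ∈ ℝ^m and e ∈ ℝ^n have nonnegative entries, set D_in := diag(d) and D_out := diag(e), and suppose that whenever d_i = 0 the i-th row of A is zero and whenever e_j = 0 the j-th column of A is zero. For a nonnegative diagonal matrix D, let D⁻ denote the diagonal matrix whose entries are the reciprocals of the nonzero diagonal entries of D and 0 elsewhere, and let D^{−1/2} := (D⁻)^{1/2} entrywise. Then the following are equivalent: (a) I_n − N*N is PSD, where N := D_in^{−1/2}·A·D_out^{−1/2}; (b) D_in − A·D_out⁻·A* is PSD; (c) D_out − A*·D_in⁻·A is PSD; (d) for some z ∈ ℂ with |z| = 1, the block matrix [[D_in, z·A],[z̄·A*, D_out]] is PSD; (e) for every z ∈ ℂ with |z| ≤ 1, the block matrix [[D_in, z·A],[z̄·A*, D_out]] is PSD. Moreover, if d_i ≥ ∑_j |A_{ij}| for all i and e_j ≥ ∑_i |A_{ij}| for all j, then conditions (a)–(e) hold; in particular they hold when A has nonnegative real entries, d is the vector of row sums of A, and e is the vector of column sums of A. -/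
open Matrix ComplexOrder

namespace Stmt2

variable {m n : ℕ}

/-- The normalization `N := D_in^{−1/2} · A · D_out^{−1/2}`, where `D_in = diag d`,
`D_out = diag e` and the inverse square roots are taken entrywise (with `0⁻¹ = 0`). -/
noncomputable def Nmat (A : Matrix (Fin m) (Fin n) ℂ) (d : Fin m → ℝ) (e : Fin n → ℝ) :
    Matrix (Fin m) (Fin n) ℂ :=
  (Matrix.diagonal fun i => (Real.sqrt ((d i)⁻¹) : ℂ)) * A *
    (Matrix.diagonal fun j => (Real.sqrt ((e j)⁻¹) : ℂ))

/-- Condition (a): `I_n − N*N` is PSD. -/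
noncomputable def condA (A : Matrix (Fin m) (Fin n) ℂ) (d : Fin m → ℝ) (e : Fin n → ℝ) : Prop :=
  ((1 : Matrix (Fin n) (Fin n) ℂ) - (Nmat A d e)ᴴ * Nmat A d e).PosSemidef

/-- Condition (b): `D_in − A · D_out⁻ · A*` is PSD. -/
def condB (A : Matrix (Fin m) (Fin n) ℂ) (d : Fin m → ℝ) (e : Fin n → ℝ) : Prop :=
  ((Matrix.diagonal fun i => (d i : ℂ)) -
      A * (Matrix.diagonal fun j => ((e j)⁻¹ : ℂ)) * Aᴴ).PosSemidef

/-- Condition (c): `D_out − A* · D_in⁻ · A` is PSD. -/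
def condC (A : Matrix (Fin m) (Fin n) ℂ) (d : Fin m → ℝ) (e : Fin n → ℝ) : Prop :=
  ((Matrix.diagonal fun j => (e j : ℂ)) -
      Aᴴ * (Matrix.diagonal fun i => ((d i)⁻¹ : ℂ)) * A).PosSemidef

/-- The block matrix `[[D_in, z·A],[z̄·A*, D_out]]`. -/
def blockMat (A : Matrix (Fin m) (Fin n) ℂ) (d : Fin m → ℝ) (e : Fin n → ℝ) (z : ℂ) :
    Matrix (Fin m ⊕ Fin n) (Fin m ⊕ Fin n) ℂ :=
  Matrix.fromBlocks (Matrix.diagonal fun i => (d i : ℂ)) (z • A)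
    ((starRingEnd ℂ z) • Aᴴ) (Matrix.diagonal fun j => (e j : ℂ))

/-- Condition (d): for some unimodular `z`, the block matrix is PSD. -/
noncomputable def condD (A : Matrix (Fin m) (Fin n) ℂ) (d : Fin m → ℝ) (e : Fin n → ℝ) : Prop :=
  ∃ z : ℂ, ‖z‖ = 1 ∧ (blockMat A d e z).PosSemidef

/-- Condition (e): for every `z` with `|z| ≤ 1`, the block matrix is PSD. -/
noncomputable def condE (A : Matrix (Fin m) (Fin n) ℂ) (d : Fin m → ℝ) (e : Fin n → ℝ) : Prop :=
  ∀ z : ℂ, ‖z‖ ≤ 1 → (blockMat A d e z).PosSemidef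

/-! ### auxiliary lemmas -/


lemma qf_sandwich (A : Matrix (Fin m) (Fin n) ℂ) (M : Matrix (Fin n) (Fin n) ℂ)
    (x : Fin m → ℂ) :
    star x ⬝ᵥ (A * M * Aᴴ) *ᵥ x = star (Aᴴ *ᵥ x) ⬝ᵥ M *ᵥ (Aᴴ *ᵥ x) := by
  rw [star_mulVec, conjTranspose_conjTranspose, ← mulVec_mulVec, ← mulVec_mulVec,
    dotProduct_mulVec (star x), ← dotProduct_mulVec]

lemma qf_diag {k : ℕ} (c : Fin k → ℝ) (v : Fin k → ℂ) :
    star v ⬝ᵥ (Matrix.diagonal fun i => (c i : ℂ)) *ᵥ v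
      = ((∑ i, c i * Complex.normSq (v i) : ℝ) : ℂ) := by
  simp only [dotProduct, mulVec_diagonal, Pi.star_apply, Complex.ofReal_sum,
    Complex.normSq_eq_conj_mul_self, Complex.ofReal_mul]
  congr 1; funext i
  simp only [RCLike.star_def]
  ring

lemma dot_shift (A : Matrix (Fin m) (Fin n) ℂ) (x : Fin m → ℂ) (y : Fin n → ℂ) :
    star x ⬝ᵥ (A *ᵥ y) = star (Aᴴ *ᵥ x) ⬝ᵥ y := by
  rw [star_mulVec, conjTranspose_conjTranspose, dotProduct_mulVec]

lemma herm_diag {k : ℕ} (c : Fin k → ℝ) :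
    (Matrix.diagonal fun i => (c i : ℂ)).IsHermitian :=
  isHermitian_diagonal_of_self_adjoint _ (funext fun i => Complex.conj_ofReal _)

lemma hermB (A : Matrix (Fin m) (Fin n) ℂ) (d : Fin m → ℝ) (e : Fin n → ℝ) :
    ((Matrix.diagonal fun i => (d i : ℂ)) -
      A * (Matrix.diagonal fun j => ((e j)⁻¹ : ℂ)) * Aᴴ).IsHermitian := by
  refine (herm_diag d).sub ?_
  have h2 : (Matrix.diagonal fun j => ((e j)⁻¹ : ℂ)).IsHermitian := by
    simpa [← Complex.ofReal_inv] using herm_diag (fun j => (e j)⁻¹)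
  unfold Matrix.IsHermitian at h2 ⊢
  simp only [conjTranspose_mul, conjTranspose_conjTranspose, Matrix.mul_assoc, h2]

lemma condB_iff (A : Matrix (Fin m) (Fin n) ℂ) (d : Fin m → ℝ) (e : Fin n → ℝ) :
    condB A d e ↔ ∀ x : Fin m → ℂ,
      (∑ j, (e j)⁻¹ * Complex.normSq ((Aᴴ *ᵥ x) j)) ≤ ∑ i, d i * Complex.normSq (x i) := by
  have key : ∀ x : Fin m → ℂ,
      star x ⬝ᵥ ((Matrix.diagonal fun i => (d i : ℂ)) -
        A * (Matrix.diagonal fun j => ((e j)⁻¹ : ℂ)) * Aᴴ) *ᵥ x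
      = (((∑ i, d i * Complex.normSq (x i))
          - ∑ j, (e j)⁻¹ * Complex.normSq ((Aᴴ *ᵥ x) j) : ℝ) : ℂ) := by
    intro x
    simp only [← Complex.ofReal_inv]
    rw [sub_mulVec, dotProduct_sub, qf_diag, qf_sandwich, qf_diag]
    push_cast; ring
  constructor
  · intro h x
    have := h.dotProduct_mulVec_nonneg x
    rw [key, Complex.zero_le_real] at this
    linarith
  · intro h
    exact .of_dotProduct_mulVec_nonneg (hermB A d e) fun x => by rw [key, Complex.zero_le_real]; linarith [h x]

lemma hermBlock (A : Matrix (Fin m) (Fin n) ℂ) (d : Fin m → ℝ) (e : Fin n → ℝ) (z : ℂ) :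
    (blockMat A d e z).IsHermitian := by
  unfold blockMat Matrix.IsHermitian
  rw [fromBlocks_conjTranspose]
  simp [conjTranspose_smul, (herm_diag d).eq, (herm_diag e).eq]

lemma qf_block (A : Matrix (Fin m) (Fin n) ℂ) (d : Fin m → ℝ) (e : Fin n → ℝ) (z : ℂ)
    (x : Fin m → ℂ) (y : Fin n → ℂ) :
    star (Sum.elim x y) ⬝ᵥ (blockMat A d e z) *ᵥ (Sum.elim x y)
      = (((∑ i, d i * Complex.normSq (x i)) + (∑ j, e j * Complex.normSq (y j))
          + 2 * (z * (star (Aᴴ *ᵥ x) ⬝ᵥ y)).re : ℝ) : ℂ) := by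
  have hstar : star (Sum.elim x y) = Sum.elim (star x) (star y) := by
    funext s; cases s <;> rfl
  unfold blockMat
  rw [hstar, fromBlocks_mulVec, sumElim_dotProduct_sumElim, dotProduct_add, dotProduct_add]
  have h1 := qf_diag d x
  have h2 := qf_diag e y
  have hzy : star x ⬝ᵥ (z • A) *ᵥ y = z * (star (Aᴴ *ᵥ x) ⬝ᵥ y) := by
    rw [smul_mulVec, dotProduct_smul, ← dot_shift]; rfl
  have hcdot : ∀ (w : Fin n → ℂ), (starRingEnd ℂ) (star w ⬝ᵥ y) = star y ⬝ᵥ w := by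
    intro w
    simp only [dotProduct, map_sum, _root_.map_mul, Pi.star_apply, RCLike.star_def,
      Complex.conj_conj]
    exact Finset.sum_congr rfl fun j _ => mul_comm _ _
  have hconj : star y ⬝ᵥ ((starRingEnd ℂ z) • Aᴴ) *ᵥ x
      = (starRingEnd ℂ) (z * (star (Aᴴ *ᵥ x) ⬝ᵥ y)) := by
    rw [smul_mulVec, dotProduct_smul, _root_.map_mul (starRingEnd ℂ), hcdot]
    rfl
  simp only [Sum.elim_comp_inl, Sum.elim_comp_inr]
  rw [h1, h2, hzy, hconj]
  have := Complex.add_conj (z * (star (Aᴴ *ᵥ x) ⬝ᵥ y))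
  push_cast at this ⊢
  linear_combination this

lemma block_iff (A : Matrix (Fin m) (Fin n) ℂ) (d : Fin m → ℝ) (e : Fin n → ℝ) (z : ℂ) :
    (blockMat A d e z).PosSemidef ↔ ∀ (x : Fin m → ℂ) (y : Fin n → ℂ),
      0 ≤ (∑ i, d i * Complex.normSq (x i)) + (∑ j, e j * Complex.normSq (y j))
          + 2 * (z * (star (Aᴴ *ᵥ x) ⬝ᵥ y)).re := by
  constructor
  · intro h x y
    have := h.dotProduct_mulVec_nonneg (Sum.elim x y)
    rwa [qf_block, Complex.zero_le_real] at this
  · intro h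
    refine .of_dotProduct_mulVec_nonneg (hermBlock A d e z) fun u => ?_
    have hu : u = Sum.elim (u ∘ Sum.inl) (u ∘ Sum.inr) := by
      funext s; cases s <;> rfl
    rw [hu, qf_block, Complex.zero_le_real]
    exact h _ _

lemma block_swap (A : Matrix (Fin m) (Fin n) ℂ) (d : Fin m → ℝ) (e : Fin n → ℝ) (z : ℂ) :
    (blockMat A d e z).PosSemidef ↔ (blockMat Aᴴ e d (starRingEnd ℂ z)).PosSemidef := by
  have key : blockMat Aᴴ e d (starRingEnd ℂ z)
      = (blockMat A d e z).submatrix (Equiv.sumComm (Fin n) (Fin m))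
          (Equiv.sumComm (Fin n) (Fin m)) := by
    ext s t
    cases s <;> cases t <;>
      simp [blockMat, Matrix.submatrix_apply, Equiv.sumComm_apply, Complex.conj_conj]
  rw [key, posSemidef_submatrix_equiv]

lemma condC_eq (A : Matrix (Fin m) (Fin n) ℂ) (d : Fin m → ℝ) (e : Fin n → ℝ) :
    condC A d e = condB Aᴴ e d := by
  unfold condB condC
  rw [conjTranspose_conjTranspose]

lemma condC_iff (A : Matrix (Fin m) (Fin n) ℂ) (d : Fin m → ℝ) (e : Fin n → ℝ) :
    condC A d e ↔ ∀ w : Fin n → ℂ,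
      (∑ i, (d i)⁻¹ * Complex.normSq ((A *ᵥ w) i)) ≤ ∑ j, e j * Complex.normSq (w j) := by
  rw [condC_eq, condB_iff]
  simp only [conjTranspose_conjTranspose]

lemma dot_self {k : ℕ} (v : Fin k → ℂ) :
    star v ⬝ᵥ v = ((∑ i, Complex.normSq (v i) : ℝ) : ℂ) := by
  simp only [dotProduct, Pi.star_apply, RCLike.star_def, Complex.ofReal_sum,
    Complex.normSq_eq_conj_mul_self]

lemma Nmat_mulVec (A : Matrix (Fin m) (Fin n) ℂ) (d : Fin m → ℝ) (e : Fin n → ℝ)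
    (y : Fin n → ℂ) :
    Nmat A d e *ᵥ y = fun i => (Real.sqrt ((d i)⁻¹) : ℂ) *
      ((A *ᵥ fun j => (Real.sqrt ((e j)⁻¹) : ℂ) * y j) i) := by
  have hdiag : (Matrix.diagonal fun j => (Real.sqrt ((e j)⁻¹) : ℂ)) *ᵥ y
      = fun j => (Real.sqrt ((e j)⁻¹) : ℂ) * y j := by
    funext j; rw [mulVec_diagonal]
  funext i
  rw [Nmat, ← mulVec_mulVec, ← mulVec_mulVec, hdiag, mulVec_diagonal]

lemma condA_iff (A : Matrix (Fin m) (Fin n) ℂ) (d : Fin m → ℝ) (e : Fin n → ℝ)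
    (hd : ∀ i, 0 ≤ d i) :
    condA A d e ↔ ∀ y : Fin n → ℂ,
      (∑ i, (d i)⁻¹ * Complex.normSq ((A *ᵥ fun j => (Real.sqrt ((e j)⁻¹) : ℂ) * y j) i))
        ≤ ∑ j, Complex.normSq (y j) := by
  have key : ∀ y : Fin n → ℂ,
      star y ⬝ᵥ ((1 : Matrix (Fin n) (Fin n) ℂ) - (Nmat A d e)ᴴ * Nmat A d e) *ᵥ y
      = (((∑ j, Complex.normSq (y j)) -
          ∑ i, (d i)⁻¹ * Complex.normSq
            ((A *ᵥ fun j => (Real.sqrt ((e j)⁻¹) : ℂ) * y j) i) : ℝ) : ℂ) := by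
    intro y
    rw [sub_mulVec, dotProduct_sub, one_mulVec, dot_self, ← mulVec_mulVec,
      dot_shift ((Nmat A d e)ᴴ) y, conjTranspose_conjTranspose, dot_self]
    have : ∑ i, Complex.normSq ((Nmat A d e *ᵥ y) i)
        = ∑ i, (d i)⁻¹ * Complex.normSq
            ((A *ᵥ fun j => (Real.sqrt ((e j)⁻¹) : ℂ) * y j) i) := by
      rw [Nmat_mulVec]
      refine Finset.sum_congr rfl fun i _ => ?_
      rw [Complex.normSq_mul, Complex.normSq_ofReal,
        Real.mul_self_sqrt (inv_nonneg.mpr (hd i))]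
    rw [this]
    push_cast; ring
  unfold condA
  constructor
  · intro h y
    have := h.dotProduct_mulVec_nonneg y
    rw [key, Complex.zero_le_real] at this
    linarith
  · intro h
    refine .of_dotProduct_mulVec_nonneg (Matrix.isHermitian_one.sub (isHermitian_conjTranspose_mul_self _)) fun y => ?_
    rw [key, Complex.zero_le_real]
    linarith [h y]

lemma condA_iff_condC (A : Matrix (Fin m) (Fin n) ℂ) (d : Fin m → ℝ) (e : Fin n → ℝ)
    (hd : ∀ i, 0 ≤ d i) (he : ∀ j, 0 ≤ e j)
    (hkerCol : ∀ j, e j = 0 → ∀ i, A i j = 0) :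
    condA A d e ↔ condC A d e := by
  rw [condA_iff A d e hd, condC_iff]
  constructor
  · intro h w
    have h1 := h (fun j => (Real.sqrt (e j) : ℂ) * w j)
    have hAv : (A *ᵥ fun j => (Real.sqrt ((e j)⁻¹) : ℂ) *
        ((Real.sqrt (e j) : ℂ) * w j)) = A *ᵥ w := by
      funext i
      simp only [mulVec, dotProduct]
      refine Finset.sum_congr rfl fun j _ => ?_
      rcases eq_or_ne (e j) 0 with h0 | h0
      · simp [hkerCol j h0 i]
      · rw [Real.sqrt_inv]
        have : (Real.sqrt (e j) : ℂ) ≠ 0 := by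
          simpa using Real.sqrt_ne_zero'.mpr (lt_of_le_of_ne (he j) (Ne.symm h0))
        push_cast
        field_simp
    rw [hAv] at h1
    have hrhs : (∑ j, Complex.normSq ((Real.sqrt (e j) : ℂ) * w j))
        = ∑ j, e j * Complex.normSq (w j) := by
      refine Finset.sum_congr rfl fun j _ => ?_
      rw [Complex.normSq_mul, Complex.normSq_ofReal, Real.mul_self_sqrt (he j)]
    rw [hrhs] at h1
    exact h1
  · intro h y
    have h1 := h (fun j => (Real.sqrt ((e j)⁻¹) : ℂ) * y j)
    refine h1.trans ?_
    refine Finset.sum_le_sum fun j _ => ?_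
    rw [Complex.normSq_mul, Complex.normSq_ofReal,
      Real.mul_self_sqrt (inv_nonneg.mpr (he j))]
    rcases eq_or_ne (e j) 0 with h0 | h0
    · simp [h0, Complex.normSq_nonneg]
    · rw [← mul_assoc, mul_inv_cancel₀ h0, one_mul]

lemma imp_db (A : Matrix (Fin m) (Fin n) ℂ) (d : Fin m → ℝ) (e : Fin n → ℝ) (z : ℂ)
    (hz : ‖z‖ = 1) (h : (blockMat A d e z).PosSemidef) : condB A d e := by
  rw [condB_iff]
  intro x
  set v : Fin n → ℂ := Aᴴ *ᵥ x with hv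
  set S : ℝ := ∑ j, (e j)⁻¹ * Complex.normSq (v j) with hS
  set y : Fin n → ℂ := fun j => -((starRingEnd ℂ) z) * (((e j)⁻¹ : ℝ) : ℂ) * v j with hy
  have hb := (block_iff A d e z).1 h x y
  have ht : star v ⬝ᵥ y = -((starRingEnd ℂ) z) * (S : ℂ) := by
    rw [hS]
    simp only [dotProduct, hy, Pi.star_apply, RCLike.star_def]
    push_cast [Finset.mul_sum]
    refine Finset.sum_congr rfl fun j _ => ?_
    rw [Complex.normSq_eq_conj_mul_self]
    ring
  have hzz : z * ((starRingEnd ℂ) z) = 1 := by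
    rw [Complex.mul_conj]
    norm_cast
    rw [← Complex.sq_norm, hz]; norm_num
  have hre : (z * (star v ⬝ᵥ y)).re = -S := by
    rw [ht]
    have : z * (-((starRingEnd ℂ) z) * (S : ℂ)) = -(S : ℂ) := by
      linear_combination (-(S : ℂ)) * hzz
    rw [this]
    simp
  have hQ : ∑ j, e j * Complex.normSq (y j) = S := by
    rw [hS]
    refine Finset.sum_congr rfl fun j _ => ?_
    rw [hy]
    simp only [Complex.normSq_mul, Complex.normSq_neg, Complex.normSq_conj,
      Complex.normSq_ofReal]
    have h1 : Complex.normSq z = 1 := by rw [← Complex.sq_norm, hz]; norm_num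
    rw [h1]
    rcases eq_or_ne (e j) 0 with h0 | h0
    · simp [h0]
    · field_simp
  rw [hre, hQ] at hb
  linarith

lemma sums_nonneg {k : ℕ} (c : Fin k → ℝ) (hc : ∀ i, 0 ≤ c i) (v : Fin k → ℂ) :
    0 ≤ ∑ i, c i * Complex.normSq (v i) :=
  Finset.sum_nonneg fun i _ => mul_nonneg (hc i) (Complex.normSq_nonneg _)

lemma imp_be (A : Matrix (Fin m) (Fin n) ℂ) (d : Fin m → ℝ) (e : Fin n → ℝ)
    (hd : ∀ i, 0 ≤ d i) (he : ∀ j, 0 ≤ e j)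
    (hkerCol : ∀ j, e j = 0 → ∀ i, A i j = 0)
    (hB : condB A d e) : condE A d e := by
  intro z hz
  rw [block_iff]
  intro x y
  set v : Fin n → ℂ := Aᴴ *ᵥ x with hv
  set t : ℂ := star v ⬝ᵥ y with htdef
  set S : ℝ := ∑ j, (e j)⁻¹ * Complex.normSq (v j) with hS
  set Qd : ℝ := ∑ i, d i * Complex.normSq (x i) with hQd
  set Qe : ℝ := ∑ j, e j * Complex.normSq (y j) with hQe
  have hS_le : S ≤ Qd := (condB_iff A d e).1 hB x
  have hS0 : 0 ≤ S := sums_nonneg _ (fun j => inv_nonneg.mpr (he j)) v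
  have hQd0 : 0 ≤ Qd := sums_nonneg _ hd x
  have hQe0 : 0 ≤ Qe := sums_nonneg _ he y
  -- Cauchy-Schwarz step
  have hab : ‖t‖ ≤ Real.sqrt S * Real.sqrt Qe := by
    have h1 : ‖t‖ ≤ ∑ j, (Real.sqrt ((e j)⁻¹) * ‖v j‖) *
        (Real.sqrt (e j) * ‖y j‖) := by
      refine (norm_sum_le _ _).trans ?_
      refine Finset.sum_le_sum fun j _ => ?_
      simp only [Pi.star_apply, RCLike.star_def, norm_mul, Complex.norm_conj]
      rcases eq_or_ne (e j) 0 with h0 | h0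
      · have : v j = 0 := by
          rw [hv]
          simp only [mulVec, dotProduct, conjTranspose_apply]
          refine Finset.sum_eq_zero fun i _ => ?_
          rw [hkerCol j h0 i]; simp
        simp [this]
      · have h1' : Real.sqrt ((e j)⁻¹) * Real.sqrt (e j) = 1 := by
          rw [Real.sqrt_inv]
          exact inv_mul_cancel₀ (by
            simpa using Real.sqrt_ne_zero'.mpr (lt_of_le_of_ne (he j) (Ne.symm h0)))
        have heq : Real.sqrt ((e j)⁻¹) * ‖v j‖ *
            (Real.sqrt (e j) * ‖y j‖)
            = ‖v j‖ * ‖y j‖ := by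
          calc Real.sqrt ((e j)⁻¹) * ‖v j‖ *
              (Real.sqrt (e j) * ‖y j‖)
              = (Real.sqrt ((e j)⁻¹) * Real.sqrt (e j)) *
                (‖v j‖ * ‖y j‖) := by ring
            _ = ‖v j‖ * ‖y j‖ := by rw [h1', one_mul]
        rw [heq]
    have h2 : (∑ j, (Real.sqrt ((e j)⁻¹) * ‖v j‖) *
        (Real.sqrt (e j) * ‖y j‖)) ^ 2 ≤ S * Qe := by
      have := Finset.sum_mul_sq_le_sq_mul_sq Finset.univ
        (fun j => Real.sqrt ((e j)⁻¹) * ‖v j‖)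
        (fun j => Real.sqrt (e j) * ‖y j‖)
      refine this.trans_eq ?_
      congr 1
      · rw [hS]
        refine Finset.sum_congr rfl fun j _ => ?_
        rw [mul_pow, Real.sq_sqrt (inv_nonneg.mpr (he j)), Complex.sq_norm]
      · rw [hQe]
        refine Finset.sum_congr rfl fun j _ => ?_
        rw [mul_pow, Real.sq_sqrt (he j), Complex.sq_norm]
    have h3 : 0 ≤ ∑ j, (Real.sqrt ((e j)⁻¹) * ‖v j‖) *
        (Real.sqrt (e j) * ‖y j‖) :=
      Finset.sum_nonneg fun j _ => mul_nonneg
        (mul_nonneg (Real.sqrt_nonneg _) (norm_nonneg _))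
        (mul_nonneg (Real.sqrt_nonneg _) (norm_nonneg _))
    have := Real.sqrt_le_sqrt h2
    rw [Real.sqrt_sq h3, Real.sqrt_mul hS0] at this
    exact h1.trans this
  have hst : Real.sqrt S ≤ Real.sqrt Qd := Real.sqrt_le_sqrt hS_le
  have habs2 : ‖t‖ ≤ Real.sqrt Qd * Real.sqrt Qe :=
    hab.trans (mul_le_mul_of_nonneg_right hst (Real.sqrt_nonneg _))
  have hre : -(Real.sqrt Qd * Real.sqrt Qe) ≤ (z * t).re := by
    have h1 : -‖z * t‖ ≤ (z * t).re :=
      (abs_le.1 (Complex.abs_re_le_norm (z * t))).1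
    have h2 : ‖z * t‖ ≤ Real.sqrt Qd * Real.sqrt Qe := by
      rw [norm_mul]
      calc ‖z‖ * ‖t‖ ≤ 1 * ‖t‖ :=
            mul_le_mul_of_nonneg_right hz (norm_nonneg _)
        _ = ‖t‖ := one_mul _
        _ ≤ _ := habs2
    linarith
  have hamgm : 2 * (Real.sqrt Qd * Real.sqrt Qe) ≤ Qd + Qe := by
    have := two_mul_le_add_sq (Real.sqrt Qd) (Real.sqrt Qe)
    rwa [Real.sq_sqrt hQd0, Real.sq_sqrt hQe0, mul_assoc] at this
  linarith

lemma dom_e (A : Matrix (Fin m) (Fin n) ℂ) (d : Fin m → ℝ) (e : Fin n → ℝ)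
    (hdom1 : ∀ i, (∑ j, ‖A i j‖) ≤ d i)
    (hdom2 : ∀ j, (∑ i, ‖A i j‖) ≤ e j) : condE A d e := by
  intro z hz
  rw [block_iff]
  intro x y
  set t : ℂ := star (Aᴴ *ᵥ x) ⬝ᵥ y with ht
  have htx : t = star x ⬝ᵥ (A *ᵥ y) := (dot_shift A x y).symm
  set nx : Fin m → ℝ := fun i => Complex.normSq (x i) with hnx
  set ny : Fin n → ℝ := fun j => Complex.normSq (y j) with hny
  have h1 : ‖t‖ ≤ ∑ i, ∑ j,
      ‖A i j‖ * ‖x i‖ * ‖y j‖ := by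
    rw [htx]
    simp only [dotProduct, mulVec]
    refine (norm_sum_le _ _).trans (Finset.sum_le_sum fun i _ => ?_)
    simp only [Pi.star_apply, RCLike.star_def, norm_mul, Complex.norm_conj]
    calc ‖x i‖ * ‖∑ j, A i j * y j‖
        ≤ ‖x i‖ * ∑ j, ‖A i j‖ * ‖y j‖ := by
          refine mul_le_mul_of_nonneg_left ?_ (norm_nonneg _)
          refine (norm_sum_le _ _).trans ?_
          exact le_of_eq (Finset.sum_congr rfl fun j _ => norm_mul _ _)
      _ = ∑ j, ‖A i j‖ * ‖x i‖ * ‖y j‖ := by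
          rw [Finset.mul_sum]
          exact Finset.sum_congr rfl fun j _ => by ring
  have h2 : 2 * ‖t‖ ≤ (∑ i, d i * nx i) + ∑ j, e j * ny j := by
    have step1 : 2 * ‖t‖ ≤ ∑ i, ∑ j, ‖A i j‖ * (nx i + ny j) := by
      have := mul_le_mul_of_nonneg_left h1 (by norm_num : (0:ℝ) ≤ 2)
      refine this.trans ?_
      rw [Finset.mul_sum]
      refine Finset.sum_le_sum fun i _ => ?_
      rw [Finset.mul_sum]
      refine Finset.sum_le_sum fun j _ => ?_
      have hsq := two_mul_le_add_sq (‖x i‖) (‖y j‖)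
      rw [Complex.sq_norm, Complex.sq_norm] at hsq
      have h0 := norm_nonneg (A i j)
      nlinarith [norm_nonneg (x i), norm_nonneg (y j)]
    have step2 : ∑ i, ∑ j, ‖A i j‖ * (nx i + ny j)
        = (∑ i, (∑ j, ‖A i j‖) * nx i)
          + ∑ j, (∑ i, ‖A i j‖) * ny j := by
      have hrow : ∀ i, ∑ j, ‖A i j‖ * (nx i + ny j)
          = (∑ j, ‖A i j‖) * nx i + ∑ j, ‖A i j‖ * ny j := by
        intro i
        simp only [mul_add, Finset.sum_add_distrib, Finset.sum_mul]
      rw [Finset.sum_congr rfl fun i _ => hrow i, Finset.sum_add_distrib]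
      congr 1
      rw [Finset.sum_comm]
      exact Finset.sum_congr rfl fun j _ => (Finset.sum_mul _ _ _).symm
    have step3 : (∑ i, (∑ j, ‖A i j‖) * nx i)
          + ∑ j, (∑ i, ‖A i j‖) * ny j
        ≤ (∑ i, d i * nx i) + ∑ j, e j * ny j := by
      refine add_le_add (Finset.sum_le_sum fun i _ => ?_) (Finset.sum_le_sum fun j _ => ?_)
      · exact mul_le_mul_of_nonneg_right (hdom1 i) (Complex.normSq_nonneg _)
      · exact mul_le_mul_of_nonneg_right (hdom2 j) (Complex.normSq_nonneg _)
    linarith [step1, step2.le, step2.ge]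
  have hre : -‖t‖ ≤ (z * t).re := by
    have ha := (abs_le.1 (Complex.abs_re_le_norm (z * t))).1
    have hb : ‖z * t‖ ≤ ‖t‖ := by
      rw [norm_mul]
      calc ‖z‖ * ‖t‖ ≤ 1 * ‖t‖ :=
            mul_le_mul_of_nonneg_right hz (norm_nonneg _)
        _ = _ := one_mul _
    linarith
  linarith

/-- conditions (a)–(e) are equivalent, they are implied by diagonal dominance,
and in particular they hold when `A` is entrywise nonnegative with row sums `d` and
column sums `e`. -/
theorem stmt_2 (A : Matrix (Fin m) (Fin n) ℂ) (d : Fin m → ℝ) (e : Fin n → ℝ)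
    (hd : ∀ i, 0 ≤ d i) (he : ∀ j, 0 ≤ e j)
    (hkerRow : ∀ i, d i = 0 → ∀ j, A i j = 0)
    (hkerCol : ∀ j, e j = 0 → ∀ i, A i j = 0) :
    ([condA A d e, condB A d e, condC A d e, condD A d e, condE A d e].TFAE) ∧
    (((∀ i, (∑ j, ‖A i j‖) ≤ d i) ∧ (∀ j, (∑ i, ‖A i j‖) ≤ e j)) →
        condA A d e ∧ condB A d e ∧ condC A d e ∧ condD A d e ∧ condE A d e) ∧
    (((∀ i j, 0 ≤ (A i j).re ∧ (A i j).im = 0) ∧ (∀ i, (d i : ℂ) = ∑ j, A i j) ∧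
        (∀ j, (e j : ℂ) = ∑ i, A i j)) →
        condA A d e ∧ condB A d e ∧ condC A d e ∧ condD A d e ∧ condE A d e) := by
  have htfae : [condA A d e, condB A d e, condC A d e, condD A d e, condE A d e].TFAE := by
    tfae_have 1 ↔ 3 := condA_iff_condC A d e hd he hkerCol
    tfae_have 2 → 5 := imp_be A d e hd he hkerCol
    tfae_have 5 → 4 := fun h => ⟨1, by simp, h 1 (by simp)⟩
    tfae_have 4 → 2 := fun ⟨z, hz, h⟩ => imp_db A d e z hz h
    tfae_have 4 → 3 := by
      rintro ⟨z, hz, h⟩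
      rw [condC_eq]
      exact imp_db Aᴴ e d ((starRingEnd ℂ) z) (by rwa [Complex.norm_conj])
        ((block_swap A d e z).1 h)
    tfae_have 3 → 5 := by
      intro h z hz
      have hker' : ∀ i : Fin m, d i = 0 → ∀ j : Fin n, Aᴴ j i = 0 := by
        intro i h0 j
        rw [conjTranspose_apply, hkerRow i h0 j, star_zero]
      have hE' : condE Aᴴ e d := by
        refine imp_be Aᴴ e d he hd hker' ?_
        rw [← condC_eq]; exact h
      exact (block_swap A d e z).2 (hE' ((starRingEnd ℂ) z) (by rwa [Complex.norm_conj]))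
    tfae_finish
  refine ⟨htfae, ?_, ?_⟩
  · rintro ⟨h1, h2⟩
    have hE : condE A d e := dom_e A d e h1 h2
    exact ⟨(htfae.out 0 4).2 hE, (htfae.out 1 4).2 hE, (htfae.out 2 4).2 hE,
      (htfae.out 3 4).2 hE, hE⟩
  · rintro ⟨hpos, hrow, hcol⟩
    have habs : ∀ i j, ‖A i j‖ = (A i j).re := by
      intro i j
      have hA : A i j = (((A i j).re : ℝ) : ℂ) := by
        apply Complex.ext
        · rfl
        · simpa using (hpos i j).2
      calc ‖A i j‖ = ‖(((A i j).re : ℝ) : ℂ)‖ := by rw [← hA]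
        _ = |(A i j).re| := by rw [Complex.norm_real, Real.norm_eq_abs]
        _ = (A i j).re := abs_of_nonneg (hpos i j).1
    have h1 : ∀ i, (∑ j, ‖A i j‖) ≤ d i := by
      intro i
      have : (∑ j, ‖A i j‖) = d i := by
        calc (∑ j, ‖A i j‖) = ∑ j, (A i j).re :=
              Finset.sum_congr rfl fun j _ => habs i j
          _ = (∑ j, A i j).re := (Complex.re_sum _ _).symm
          _ = ((d i : ℂ)).re := by rw [← hrow i]
          _ = d i := Complex.ofReal_re _
      exact this.le
    have h2 : ∀ j, (∑ i, ‖A i j‖) ≤ e j := by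
      intro j
      have : (∑ i, ‖A i j‖) = e j := by
        calc (∑ i, ‖A i j‖) = ∑ i, (A i j).re :=
              Finset.sum_congr rfl fun i _ => habs i j
          _ = (∑ i, A i j).re := (Complex.re_sum _ _).symm
          _ = ((e j : ℂ)).re := by rw [← hcol j]
          _ = e j := Complex.ofReal_re _
      exact this.le
    have hE : condE A d e := dom_e A d e h1 h2
    exact ⟨(htfae.out 0 4).2 hE, (htfae.out 1 4).2 hE, (htfae.out 2 4).2 hE,
      (htfae.out 3 4).2 hE, hE⟩

end Stmt2
end

section
/- Let A, Ã ∈ ℂ^{m×n} and let d ∈ ℝ^m, e ∈ ℝ^n have nonnegative entries, D_in := diag(d), D_out := diag(e); suppose whenever d_i = 0 the i-th rows of both A and Ã are zero and whenever e_j = 0 the j-th columns of both A and Ã are zero. Let D⁻ denote the diagonal matrix of reciprocals of the nonzero entries of a nonnegative diagonal matrix D (0 elsewhere), and D^{−1/2} := (D⁻)^{1/2} entrywise. Set N := D_in^{−1/2}·A·D_out^{−1/2} and Ñ := D_in^{−1/2}·Ã·D_out^{−1/2}. Then Ã is an ε-SV approximation of A with respect to D_in, D_out if and only if Ñ is an ε-normalized-SV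 approximation of N. -/
open Matrix ComplexOrder

/-- `Ã` is an `ε`-normalized-SV approximation of `A`. -/
noncomputable def IsNSVApprox {α β : Type*} [Fintype α] [Fintype β] [DecidableEq α]
    [DecidableEq β] (ε : ℝ) (A Atil : Matrix α β ℂ) : Prop :=
  ((1 : Matrix α α ℂ) - A * Aᴴ).PosSemidef ∧
  ((1 : Matrix β β ℂ) - Aᴴ * A).PosSemidef ∧
  ∀ (x : α → ℂ) (y : β → ℂ),
    ‖star x ⬝ᵥ (Atil - A).mulVec y‖ ≤
      ε / 4 * ((star x ⬝ᵥ ((1 : Matrix α α ℂ) - A * Aᴴ).mulVec x).re +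
        (star y ⬝ᵥ ((1 : Matrix β β ℂ) - Aᴴ * A).mulVec y).re)

/-- `Ã` is an `ε`-SV approximation of `A` with respect to the diagonal degree matrices
`D_in = diag d` and `D_out = diag e` (with `D⁻` the pseudo-inverse of a nonnegative
diagonal matrix, realized by real inversion with convention `0⁻¹ = 0`). -/
noncomputable def IsSVApprox {m n : ℕ} (ε : ℝ) (d : Fin m → ℝ) (e : Fin n → ℝ)
    (A Atil : Matrix (Fin m) (Fin n) ℂ) : Prop :=
  (∀ i, d i = 0 → ∀ j, A i j = 0) ∧
  (∀ j, e j = 0 → ∀ i, A i j = 0) ∧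
  ((Matrix.diagonal fun i => (d i : ℂ)) -
      A * (Matrix.diagonal fun j => ((e j)⁻¹ : ℂ)) * Aᴴ).PosSemidef ∧
  ((Matrix.diagonal fun j => (e j : ℂ)) -
      Aᴴ * (Matrix.diagonal fun i => ((d i)⁻¹ : ℂ)) * A).PosSemidef ∧
  ∀ (x : Fin m → ℂ) (y : Fin n → ℂ),
    ‖star x ⬝ᵥ (Atil - A).mulVec y‖ ≤
      ε / 4 *
        ((star x ⬝ᵥ ((Matrix.diagonal fun i => (d i : ℂ)) -
            A * (Matrix.diagonal fun j => ((e j)⁻¹ : ℂ)) * Aᴴ).mulVec x).re +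
         (star y ⬝ᵥ ((Matrix.diagonal fun j => (e j : ℂ)) -
            Aᴴ * (Matrix.diagonal fun i => ((d i)⁻¹ : ℂ)) * A).mulVec y).re)

private lemma bilin {α β α' β' : Type*} [Fintype α] [Fintype β] [Fintype α'] [Fintype β']
    (B : Matrix α' α ℂ) (M : Matrix α' β' ℂ) (C : Matrix β' β ℂ) (x : α → ℂ) (y : β → ℂ) :
    star x ⬝ᵥ (Bᴴ * M * C) *ᵥ y = star (B *ᵥ x) ⬝ᵥ M *ᵥ (C *ᵥ y) := by
  rw [star_mulVec, ← mulVec_mulVec, ← mulVec_mulVec, dotProduct_mulVec]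

set_option maxHeartbeats 1000000 in
/-- SV approximation with respect to `D_in`, `D_out` is equivalent to
normalized-SV approximation of the normalized matrices
`N = D_in^{−1/2}·A·D_out^{−1/2}` and `Ñ = D_in^{−1/2}·Ã·D_out^{−1/2}`. -/
theorem stmt_5 {m n : ℕ} (A Atil : Matrix (Fin m) (Fin n) ℂ)
    (d : Fin m → ℝ) (e : Fin n → ℝ)
    (hd : ∀ i, 0 ≤ d i) (he : ∀ j, 0 ≤ e j)
    (hkerRowA : ∀ i, d i = 0 → ∀ j, A i j = 0)
    (hkerColA : ∀ j, e j = 0 → ∀ i, A i j = 0)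
    (hkerRowAtil : ∀ i, d i = 0 → ∀ j, Atil i j = 0)
    (hkerColAtil : ∀ j, e j = 0 → ∀ i, Atil i j = 0)
    (ε : ℝ) (hε : 0 ≤ ε) :
    IsSVApprox ε d e A Atil ↔
      IsNSVApprox ε
        ((Matrix.diagonal fun i => (Real.sqrt ((d i)⁻¹) : ℂ)) * A *
          (Matrix.diagonal fun j => (Real.sqrt ((e j)⁻¹) : ℂ)))
        ((Matrix.diagonal fun i => (Real.sqrt ((d i)⁻¹) : ℂ)) * Atil *
          (Matrix.diagonal fun j => (Real.sqrt ((e j)⁻¹) : ℂ))) := by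
  have hr1 : ∀ r : ℝ, 0 ≤ r → Real.sqrt r⁻¹ * Real.sqrt r = if r = 0 then 0 else 1 := by
    intro r hr
    by_cases h : r = 0
    · simp [h]
    · rw [if_neg h, Real.sqrt_inv,
        inv_mul_cancel₀ (Real.sqrt_ne_zero'.mpr (lt_of_le_of_ne hr (Ne.symm h)))]
  rw [IsSVApprox, IsNSVApprox]
  set S : Matrix (Fin m) (Fin m) ℂ := Matrix.diagonal fun i => (Real.sqrt ((d i)⁻¹) : ℂ) with hSdef
  set T : Matrix (Fin n) (Fin n) ℂ := Matrix.diagonal fun j => (Real.sqrt ((e j)⁻¹) : ℂ) with hTdef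
  set S' : Matrix (Fin m) (Fin m) ℂ := Matrix.diagonal fun i => (Real.sqrt (d i) : ℂ) with hS'def
  set T' : Matrix (Fin n) (Fin n) ℂ := Matrix.diagonal fun j => (Real.sqrt (e j) : ℂ) with hT'def
  set Dp : Matrix (Fin m) (Fin m) ℂ := Matrix.diagonal fun i => if d i = 0 then 0 else 1 with hDpdef
  set Ep : Matrix (Fin n) (Fin n) ℂ := Matrix.diagonal fun j => if e j = 0 then 0 else 1 with hEpdef
  set N : Matrix (Fin m) (Fin n) ℂ := S * A * T with hNdef
  set Ntil : Matrix (Fin m) (Fin n) ℂ := S * Atil * T with hNtildef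
  set E : Matrix (Fin m) (Fin m) ℂ := (Matrix.diagonal fun i => (d i : ℂ)) -
      A * (Matrix.diagonal fun j => ((e j)⁻¹ : ℂ)) * Aᴴ with hEdef
  set F : Matrix (Fin n) (Fin n) ℂ := (Matrix.diagonal fun j => (e j : ℂ)) -
      Aᴴ * (Matrix.diagonal fun i => ((d i)⁻¹ : ℂ)) * A with hFdef
  -- Hermitian facts for the real diagonal matrices
  have hSH : Sᴴ = S := by
    rw [hSdef, Matrix.diagonal_conjTranspose]; refine congrArg Matrix.diagonal (funext fun i => ?_)
    exact Complex.conj_ofReal _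
  have hTH : Tᴴ = T := by
    rw [hTdef, Matrix.diagonal_conjTranspose]; refine congrArg Matrix.diagonal (funext fun j => ?_)
    exact Complex.conj_ofReal _
  have hS'H : S'ᴴ = S' := by
    rw [hS'def, Matrix.diagonal_conjTranspose]; refine congrArg Matrix.diagonal (funext fun i => ?_)
    exact Complex.conj_ofReal _
  have hT'H : T'ᴴ = T' := by
    rw [hT'def, Matrix.diagonal_conjTranspose]; refine congrArg Matrix.diagonal (funext fun j => ?_)
    exact Complex.conj_ofReal _
  have hDpH : Dpᴴ = Dp := by
    rw [hDpdef, Matrix.diagonal_conjTranspose]; refine congrArg Matrix.diagonal (funext fun i => ?_)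
    by_cases h : d i = 0 <;> simp [h]
  have hEpH : Epᴴ = Ep := by
    rw [hEpdef, Matrix.diagonal_conjTranspose]; refine congrArg Matrix.diagonal (funext fun j => ?_)
    by_cases h : e j = 0 <;> simp [h]
  -- diagonal product facts
  have hSS' : S * S' = Dp := by
    rw [hSdef, hS'def, hDpdef, Matrix.diagonal_mul_diagonal]; refine congrArg Matrix.diagonal (funext fun i => ?_)
    rw [← Complex.ofReal_mul, hr1 (d i) (hd i)]
    simp [apply_ite Complex.ofReal]
  have hS'S : S' * S = Dp := by
    rw [hSdef, hS'def, hDpdef, Matrix.diagonal_mul_diagonal]; refine congrArg Matrix.diagonal (funext fun i => ?_)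
    rw [← Complex.ofReal_mul, mul_comm, hr1 (d i) (hd i)]
    simp [apply_ite Complex.ofReal]
  have hTT' : T * T' = Ep := by
    rw [hTdef, hT'def, hEpdef, Matrix.diagonal_mul_diagonal]; refine congrArg Matrix.diagonal (funext fun j => ?_)
    rw [← Complex.ofReal_mul, hr1 (e j) (he j)]
    simp [apply_ite Complex.ofReal]
  have hT'T : T' * T = Ep := by
    rw [hTdef, hT'def, hEpdef, Matrix.diagonal_mul_diagonal]; refine congrArg Matrix.diagonal (funext fun j => ?_)
    rw [← Complex.ofReal_mul, mul_comm, hr1 (e j) (he j)]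
    simp [apply_ite Complex.ofReal]
  have hSS : S * S = Matrix.diagonal fun i => ((d i)⁻¹ : ℂ) := by
    rw [hSdef, Matrix.diagonal_mul_diagonal]; refine congrArg Matrix.diagonal (funext fun i => ?_)
    rw [← Complex.ofReal_mul, Real.mul_self_sqrt (inv_nonneg.mpr (hd i)), Complex.ofReal_inv]
  have hTT : T * T = Matrix.diagonal fun j => ((e j)⁻¹ : ℂ) := by
    rw [hTdef, Matrix.diagonal_mul_diagonal]; refine congrArg Matrix.diagonal (funext fun j => ?_)
    rw [← Complex.ofReal_mul, Real.mul_self_sqrt (inv_nonneg.mpr (he j)), Complex.ofReal_inv]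
  have hS'S' : S' * S' = Matrix.diagonal fun i => ((d i) : ℂ) := by
    rw [hS'def, Matrix.diagonal_mul_diagonal]; refine congrArg Matrix.diagonal (funext fun i => ?_)
    rw [← Complex.ofReal_mul, Real.mul_self_sqrt (hd i)]
  have hT'T' : T' * T' = Matrix.diagonal fun j => ((e j) : ℂ) := by
    rw [hT'def, Matrix.diagonal_mul_diagonal]; refine congrArg Matrix.diagonal (funext fun j => ?_)
    rw [← Complex.ofReal_mul, Real.mul_self_sqrt (he j)]
  have hDpDp : Dp * Dp = Dp := by
    rw [hDpdef, Matrix.diagonal_mul_diagonal]; refine congrArg Matrix.diagonal (funext fun i => ?_)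
    by_cases h : d i = 0 <;> simp [h]
  have hEpEp : Ep * Ep = Ep := by
    rw [hEpdef, Matrix.diagonal_mul_diagonal]; refine congrArg Matrix.diagonal (funext fun j => ?_)
    by_cases h : e j = 0 <;> simp [h]
  -- kernel facts
  have hDpA : Dp * A = A := by
    ext i j; rw [hDpdef, Matrix.diagonal_mul]
    by_cases h : d i = 0
    · simp [h, hkerRowA i h j]
    · simp [h]
  have hDpAtil : Dp * Atil = Atil := by
    ext i j; rw [hDpdef, Matrix.diagonal_mul]
    by_cases h : d i = 0
    · simp [h, hkerRowAtil i h j]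
    · simp [h]
  have hAEp : A * Ep = A := by
    ext i j; rw [hEpdef, Matrix.mul_diagonal]
    by_cases h : e j = 0
    · simp [h, hkerColA j h i]
    · simp [h]
  have hAtilEp : Atil * Ep = Atil := by
    ext i j; rw [hEpdef, Matrix.mul_diagonal]
    by_cases h : e j = 0
    · simp [h, hkerColAtil j h i]
    · simp [h]
  have hAHDp : Aᴴ * Dp = Aᴴ := by
    have := congrArg Matrix.conjTranspose hDpA
    rwa [Matrix.conjTranspose_mul, hDpH] at this
  have hEpAH : Ep * Aᴴ = Aᴴ := by
    have := congrArg Matrix.conjTranspose hAEp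
    rwa [Matrix.conjTranspose_mul, hEpH] at this
  -- conjugate transpose of N
  have hNH : Nᴴ = T * Aᴴ * S := by
    rw [hNdef, Matrix.conjTranspose_mul, Matrix.conjTranspose_mul, hSH, hTH, Matrix.mul_assoc]
  have hNtilH : Ntilᴴ = T * Atilᴴ * S := by
    rw [hNtildef, Matrix.conjTranspose_mul, Matrix.conjTranspose_mul, hSH, hTH, Matrix.mul_assoc]
  -- key product facts
  have hS'N : S' * N = A * T := by
    rw [hNdef, ← Matrix.mul_assoc, ← Matrix.mul_assoc, hS'S, hDpA]
  have hNHS' : Nᴴ * S' = T * Aᴴ := by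
    rw [hNH, Matrix.mul_assoc, hSS', Matrix.mul_assoc, hAHDp]
  have hT'NH : T' * Nᴴ = Aᴴ * S := by
    rw [hNH, ← Matrix.mul_assoc, ← Matrix.mul_assoc, hT'T, hEpAH]
  have hNT' : N * T' = S * A := by
    rw [hNdef, Matrix.mul_assoc, hTT', Matrix.mul_assoc, hAEp]
  -- identity (I): E = S' (1 - N Nᴴ) S'
  have hI : S' * ((1 : Matrix (Fin m) (Fin m) ℂ) - N * Nᴴ) * S' = E := by
    rw [Matrix.mul_sub, Matrix.mul_one, Matrix.sub_mul]
    rw [← Matrix.mul_assoc S' N Nᴴ, Matrix.mul_assoc (S' * N) Nᴴ S', hS'N, hNHS', hS'S']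
    rw [hEdef]
    congr 1
    rw [Matrix.mul_assoc A T (T * Aᴴ), ← Matrix.mul_assoc T T Aᴴ, hTT, ← Matrix.mul_assoc]
  -- identity (II): 1 - N Nᴴ = (1 - Dp) + S E S
  have hNNH : N * Nᴴ = S * (A * (Matrix.diagonal fun j => ((e j)⁻¹ : ℂ)) * Aᴴ) * S := by
    rw [hNH, hNdef]
    simp only [Matrix.mul_assoc]
    rw [← Matrix.mul_assoc T T (Aᴴ * S), hTT]
  have hSdS : S * (Matrix.diagonal fun i => ((d i) : ℂ)) * S = Dp := by
    rw [← hS'S', ← Matrix.mul_assoc, Matrix.mul_assoc (S * S') S' S, hSS', hS'S, hDpDp]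
  have hII : (1 : Matrix (Fin m) (Fin m) ℂ) - N * Nᴴ = (1 - Dp) + S * E * S := by
    have hSES : S * E * S = Dp - N * Nᴴ := by
      rw [hEdef, Matrix.mul_sub, Matrix.sub_mul, hSdS, hNNH, Matrix.mul_assoc]
    rw [hSES, sub_add_sub_cancel]
  -- identity (III): F = T' (1 - Nᴴ N) T'
  have hIII : T' * ((1 : Matrix (Fin n) (Fin n) ℂ) - Nᴴ * N) * T' = F := by
    rw [Matrix.mul_sub, Matrix.mul_one, Matrix.sub_mul]
    rw [← Matrix.mul_assoc T' Nᴴ N, Matrix.mul_assoc (T' * Nᴴ) N T', hT'NH, hNT', hT'T']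
    rw [hFdef]
    congr 1
    rw [Matrix.mul_assoc Aᴴ S (S * A), ← Matrix.mul_assoc S S A, hSS, ← Matrix.mul_assoc]
  -- identity (IV): 1 - Nᴴ N = (1 - Ep) + T F T
  have hNHN : Nᴴ * N = T * (Aᴴ * (Matrix.diagonal fun i => ((d i)⁻¹ : ℂ)) * A) * T := by
    rw [hNH, hNdef]
    simp only [Matrix.mul_assoc]
    rw [← Matrix.mul_assoc S S (A * T), hSS]
  have hTeT : T * (Matrix.diagonal fun j => ((e j) : ℂ)) * T = Ep := by
    rw [← hT'T', ← Matrix.mul_assoc, Matrix.mul_assoc (T * T') T' T, hTT', hT'T, hEpEp]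
  have hIV : (1 : Matrix (Fin n) (Fin n) ℂ) - Nᴴ * N = (1 - Ep) + T * F * T := by
    have hTFT : T * F * T = Ep - Nᴴ * N := by
      rw [hFdef, Matrix.mul_sub, Matrix.sub_mul, hTeT, hNHN, Matrix.mul_assoc]
    rw [hTFT, sub_add_sub_cancel]
  -- difference identities
  have hdiff1 : Ntil - N = S * (Atil - A) * T := by
    rw [hNdef, hNtildef, Matrix.mul_sub, Matrix.sub_mul]
  have hdiff2 : Atil - A = S' * (Ntil - N) * T' := by
    rw [Matrix.mul_sub, Matrix.sub_mul, hNdef, hNtildef]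
    rw [← Matrix.mul_assoc S' (S * Atil) T, ← Matrix.mul_assoc S' S Atil, hS'S, hDpAtil]
    rw [← Matrix.mul_assoc S' (S * A) T, ← Matrix.mul_assoc S' S A, hS'S, hDpA]
    rw [Matrix.mul_assoc Atil T T', hTT', hAtilEp, Matrix.mul_assoc A T T', hTT', hAEp]
  -- positive semidefiniteness of 1 - Dp and 1 - Ep
  have h1Dp : ((1 : Matrix (Fin m) (Fin m) ℂ) - Dp).PosSemidef := by
    have h : (1 : Matrix (Fin m) (Fin m) ℂ) - Dp =
        Matrix.diagonal (fun i => if d i = 0 then 1 else 0) := by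
      rw [hDpdef, ← Matrix.diagonal_one, Matrix.diagonal_sub]
      refine congrArg Matrix.diagonal (funext fun i => ?_); by_cases h : d i = 0 <;> simp [h]
    rw [h]
    exact Matrix.posSemidef_diagonal_iff.mpr fun i => by
      by_cases h : d i = 0 <;> simp [h]
  have h1Ep : ((1 : Matrix (Fin n) (Fin n) ℂ) - Ep).PosSemidef := by
    have h : (1 : Matrix (Fin n) (Fin n) ℂ) - Ep =
        Matrix.diagonal (fun j => if e j = 0 then 1 else 0) := by
      rw [hEpdef, ← Matrix.diagonal_one, Matrix.diagonal_sub]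
      refine congrArg Matrix.diagonal (funext fun j => ?_); by_cases h : e j = 0 <;> simp [h]
    rw [h]
    exact Matrix.posSemidef_diagonal_iff.mpr fun j => by
      by_cases h : e j = 0 <;> simp [h]
  have quadre : ∀ {k : ℕ} (M : Matrix (Fin k) (Fin k) ℂ), M.PosSemidef →
      ∀ x : Fin k → ℂ, 0 ≤ (star x ⬝ᵥ M *ᵥ x).re := by
    intro k M hM x
    simpa using (Complex.le_def.mp (hM.dotProduct_mulVec_nonneg x)).1
  constructor
  · rintro ⟨_, _, hE, hF, hineq⟩
    refine ⟨?_, ?_, ?_⟩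
    · rw [hII]
      have h2 := hE.conjTranspose_mul_mul_same S
      rw [hSH] at h2
      exact h1Dp.add h2
    · rw [hIV]
      have h2 := hF.conjTranspose_mul_mul_same T
      rw [hTH] at h2
      exact h1Ep.add h2
    · intro x y
      rw [hdiff1, ← hSH, bilin]
      refine le_trans (hineq (S *ᵥ x) (T *ᵥ y)) ?_
      have eqx : star (S *ᵥ x) ⬝ᵥ E *ᵥ (S *ᵥ x) = star x ⬝ᵥ (S * E * S) *ᵥ x := by
        rw [← bilin S E S x x, hSH]
      have eqy : star (T *ᵥ y) ⬝ᵥ F *ᵥ (T *ᵥ y) = star y ⬝ᵥ (T * F * T) *ᵥ y := by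
        rw [← bilin T F T y y, hTH]
      have splitx : star x ⬝ᵥ ((1 : Matrix (Fin m) (Fin m) ℂ) - N * Nᴴ) *ᵥ x =
          star x ⬝ᵥ ((1 : Matrix (Fin m) (Fin m) ℂ) - Dp) *ᵥ x
            + star x ⬝ᵥ (S * E * S) *ᵥ x := by
        rw [hII, Matrix.add_mulVec, dotProduct_add]
      have splity : star y ⬝ᵥ ((1 : Matrix (Fin n) (Fin n) ℂ) - Nᴴ * N) *ᵥ y =
          star y ⬝ᵥ ((1 : Matrix (Fin n) (Fin n) ℂ) - Ep) *ᵥ y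
            + star y ⬝ᵥ (T * F * T) *ᵥ y := by
        rw [hIV, Matrix.add_mulVec, dotProduct_add]
      have hx : (star (S *ᵥ x) ⬝ᵥ E *ᵥ (S *ᵥ x)).re ≤
          (star x ⬝ᵥ ((1 : Matrix (Fin m) (Fin m) ℂ) - N * Nᴴ) *ᵥ x).re := by
        rw [eqx, splitx, Complex.add_re]
        linarith [quadre _ h1Dp x]
      have hy : (star (T *ᵥ y) ⬝ᵥ F *ᵥ (T *ᵥ y)).re ≤
          (star y ⬝ᵥ ((1 : Matrix (Fin n) (Fin n) ℂ) - Nᴴ * N) *ᵥ y).re := by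
        rw [eqy, splity, Complex.add_re]
        linarith [quadre _ h1Ep y]
      have h4 : 0 ≤ ε / 4 := by linarith
      exact mul_le_mul_of_nonneg_left (add_le_add hx hy) h4
  · rintro ⟨hN1, hN2, hineq⟩
    refine ⟨hkerRowA, hkerColA, ?_, ?_, ?_⟩
    · rw [← hI]
      have h2 := hN1.conjTranspose_mul_mul_same S'
      rw [hS'H] at h2
      exact h2
    · rw [← hIII]
      have h2 := hN2.conjTranspose_mul_mul_same T'
      rw [hT'H] at h2
      exact h2
    · intro x y
      rw [hdiff2, ← hS'H, bilin]
      refine le_trans (hineq (S' *ᵥ x) (T' *ᵥ y)) ?_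
      have eqx : star (S' *ᵥ x) ⬝ᵥ ((1 : Matrix (Fin m) (Fin m) ℂ) - N * Nᴴ) *ᵥ (S' *ᵥ x) =
          star x ⬝ᵥ E *ᵥ x := by
        rw [← bilin S' _ S' x x, hS'H, hI]
      have eqy : star (T' *ᵥ y) ⬝ᵥ ((1 : Matrix (Fin n) (Fin n) ℂ) - Nᴴ * N) *ᵥ (T' *ᵥ y) =
          star y ⬝ᵥ F *ᵥ y := by
        rw [← bilin T' _ T' y y, hT'H, hIII]
      rw [eqx, eqy]
end

section
/- Let N, Ñ ∈ ℂ^{n×n} with Ñ an ε-normalized-SV approximation of N, and let U, V ∈ ℂ^{n×n} satisfy that I − U*U and I − V*V are positive semidefinite (i.e. U and V have spectral norm at most 1). Then U·Ñ·V is an ε-normalized-SV approximation of U·N·V. -/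
open Matrix ComplexOrder

namespace NSVaux

variable {n : ℕ}

/-- Adjoint identity. -/
lemma adj (A : Matrix (Fin n) (Fin n) ℂ) (x y : Fin n → ℂ) :
    star x ⬝ᵥ A *ᵥ y = star (Aᴴ *ᵥ x) ⬝ᵥ y := by
  rw [dotProduct_mulVec, star_mulVec, conjTranspose_conjTranspose]

lemma quad1 (A : Matrix (Fin n) (Fin n) ℂ) (x : Fin n → ℂ) :
    star x ⬝ᵥ ((1 : Matrix (Fin n) (Fin n) ℂ) - Aᴴ * A) *ᵥ x
      = star x ⬝ᵥ x - star (A *ᵥ x) ⬝ᵥ (A *ᵥ x) := by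
  rw [sub_mulVec, dotProduct_sub, one_mulVec, ← mulVec_mulVec, adj,
    conjTranspose_conjTranspose]

lemma f_nonneg (x : Fin n → ℂ) : 0 ≤ (star x ⬝ᵥ x).re :=
  (Complex.le_def.mp (dotProduct_star_self_nonneg x)).1

lemma f_im (x : Fin n → ℂ) : (star x ⬝ᵥ x).im = 0 :=
  ((Complex.le_def.mp (dotProduct_star_self_nonneg x)).2).symm

/-- Contraction from PSD of `1 - Aᴴ * A`. -/
lemma contr {A : Matrix (Fin n) (Fin n) ℂ}
    (hA : ((1 : Matrix (Fin n) (Fin n) ℂ) - Aᴴ * A).PosSemidef) (x : Fin n → ℂ) :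
    (star (A *ᵥ x) ⬝ᵥ (A *ᵥ x)).re ≤ (star x ⬝ᵥ x).re := by
  have h := (Complex.le_def.mp (hA.dotProduct_mulVec_nonneg x)).1
  rw [quad1, Complex.sub_re] at h
  simp only [Complex.zero_re] at h
  linarith

/-- Cauchy–Schwarz for the complex dot product. -/
lemma cs (x y : Fin n → ℂ) :
    ‖star x ⬝ᵥ y‖ ≤
      Real.sqrt (star x ⬝ᵥ x).re * Real.sqrt (star y ⬝ᵥ y).re := by
  have hn : ∀ z : Fin n → ℂ, ‖(WithLp.equiv 2 (Fin n → ℂ)).symm z‖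
      = Real.sqrt (star z ⬝ᵥ z).re := by
    intro z
    rw [norm_eq_sqrt_re_inner (𝕜 := ℂ), WithLp.equiv_symm_apply, EuclideanSpace.inner_toLp_toLp, dotProduct_comm]
    simp
  have h := norm_inner_le_norm (𝕜 := ℂ)
    ((WithLp.equiv 2 (Fin n → ℂ)).symm x) ((WithLp.equiv 2 (Fin n → ℂ)).symm y)
  rw [hn, hn, WithLp.equiv_symm_apply, EuclideanSpace.inner_toLp_toLp, dotProduct_comm] at h
  exact h

/-- Contraction of the conjugate transpose from PSD of `1 - Aᴴ * A`. -/
lemma ct_contr {A : Matrix (Fin n) (Fin n) ℂ}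
    (hA : ((1 : Matrix (Fin n) (Fin n) ℂ) - Aᴴ * A).PosSemidef) (x : Fin n → ℂ) :
    (star (Aᴴ *ᵥ x) ⬝ᵥ (Aᴴ *ᵥ x)).re ≤ (star x ⬝ᵥ x).re := by
  set w : Fin n → ℂ := Aᴴ *ᵥ x with hw
  set a : ℝ := (star w ⬝ᵥ w).re with ha
  have key : star x ⬝ᵥ (A *ᵥ w) = star w ⬝ᵥ w := by
    rw [adj, ← hw]
  have h1 : a ≤ ‖star x ⬝ᵥ (A *ᵥ w)‖ := by
    rw [ha, ← key]
    exact Complex.re_le_norm _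
  have h2 : ‖star x ⬝ᵥ (A *ᵥ w)‖ ≤
      Real.sqrt (star x ⬝ᵥ x).re * Real.sqrt (star (A *ᵥ w) ⬝ᵥ (A *ᵥ w)).re := cs _ _
  have h3 : Real.sqrt (star (A *ᵥ w) ⬝ᵥ (A *ᵥ w)).re ≤ Real.sqrt a :=
    Real.sqrt_le_sqrt (contr hA w)
  have h4 : a ≤ Real.sqrt (star x ⬝ᵥ x).re * Real.sqrt a := by
    calc a ≤ _ := h1
    _ ≤ _ := h2
    _ ≤ _ := by
      have := Real.sqrt_nonneg (star x ⬝ᵥ x).re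
      nlinarith
  have ha0 : 0 ≤ a := f_nonneg w
  have hx0 : 0 ≤ (star x ⬝ᵥ x).re := f_nonneg x
  nlinarith [Real.sq_sqrt ha0, Real.sq_sqrt hx0, Real.sqrt_nonneg a,
    Real.sqrt_nonneg (star x ⬝ᵥ x).re]

/-- PSD of `1 - AᴴA` from contraction. -/
lemma psd_one_sub (A : Matrix (Fin n) (Fin n) ℂ)
    (h : ∀ x, (star (A *ᵥ x) ⬝ᵥ (A *ᵥ x)).re ≤ (star x ⬝ᵥ x).re) :
    ((1 : Matrix (Fin n) (Fin n) ℂ) - Aᴴ * A).PosSemidef := by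
  refine Matrix.PosSemidef.of_dotProduct_mulVec_nonneg ?_ ?_
  · simp [Matrix.IsHermitian, conjTranspose_sub, conjTranspose_mul]
  · intro x
    rw [quad1, Complex.le_def]
    constructor
    · simp only [Complex.zero_re, Complex.sub_re]
      linarith [h x]
    · simp [Complex.sub_im, f_im]

end NSVaux

open NSVaux in
/-- normalized-SV approximation is preserved under multiplication on the left
and right by matrices of spectral norm at most `1`. -/
theorem stmt_6 {n : ℕ} (N Ntil U V : Matrix (Fin n) (Fin n) ℂ) (ε : ℝ) (hε : 0 ≤ ε)
    (hU : ((1 : Matrix (Fin n) (Fin n) ℂ) - Uᴴ * U).PosSemidef)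
    (hV : ((1 : Matrix (Fin n) (Fin n) ℂ) - Vᴴ * V).PosSemidef)
    (hNSV : IsNSVApprox ε N Ntil) :
    IsNSVApprox ε (U * N * V) (U * Ntil * V) := by
  obtain ⟨hN1, hN2, hNb⟩ := hNSV
  have hN1' : ((1 : Matrix (Fin n) (Fin n) ℂ) - (Nᴴ)ᴴ * Nᴴ).PosSemidef := by
    rwa [conjTranspose_conjTranspose]
  -- contractions
  have cU := contr hU
  have cV := contr hV
  have cN := contr hN2
  have cUt := ct_contr hU
  have cVt := ct_contr hV
  have cNt := contr hN1'
  set M := U * N * V with hM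
  have hMv : ∀ x, M *ᵥ x = U *ᵥ (N *ᵥ (V *ᵥ x)) := by
    intro x; simp [hM, mulVec_mulVec, Matrix.mul_assoc]
  have hMtv : ∀ x, Mᴴ *ᵥ x = Vᴴ *ᵥ (Nᴴ *ᵥ (Uᴴ *ᵥ x)) := by
    intro x; simp [hM, conjTranspose_mul, mulVec_mulVec, Matrix.mul_assoc]
  have hMc : ∀ x, (star (M *ᵥ x) ⬝ᵥ (M *ᵥ x)).re ≤ (star x ⬝ᵥ x).re := by
    intro x
    rw [hMv]
    exact le_trans (cU _) (le_trans (cN _) (cV _))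
  have hMtc : ∀ x, (star (Mᴴ *ᵥ x) ⬝ᵥ (Mᴴ *ᵥ x)).re ≤ (star x ⬝ᵥ x).re := by
    intro x
    rw [hMtv]
    exact le_trans (cVt _) (le_trans (cNt _) (cUt _))
  have hpsd1 : ((1 : Matrix (Fin n) (Fin n) ℂ) - M * Mᴴ).PosSemidef := by
    have := psd_one_sub Mᴴ hMtc
    rwa [conjTranspose_conjTranspose] at this
  have hpsd2 : ((1 : Matrix (Fin n) (Fin n) ℂ) - Mᴴ * M).PosSemidef :=
    psd_one_sub M hMc
  refine ⟨hpsd1, hpsd2, fun x y => ?_⟩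
  have hdiff : U * Ntil * V - M = U * ((Ntil - N) * V) := by
    rw [hM]; noncomm_ring
  have hlhs : star x ⬝ᵥ (U * Ntil * V - M) *ᵥ y
      = star (Uᴴ *ᵥ x) ⬝ᵥ (Ntil - N) *ᵥ (V *ᵥ y) := by
    rw [hdiff, ← mulVec_mulVec, adj, ← mulVec_mulVec]
  have hb := hNb (Uᴴ *ᵥ x) (V *ᵥ y)
  have hx' : (star (Uᴴ *ᵥ x) ⬝ᵥ ((1 : Matrix (Fin n) (Fin n) ℂ) - N * Nᴴ) *ᵥ (Uᴴ *ᵥ x)).re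
      ≤ (star x ⬝ᵥ ((1 : Matrix (Fin n) (Fin n) ℂ) - M * Mᴴ) *ᵥ x).re := by
    have e1 : (1 : Matrix (Fin n) (Fin n) ℂ) - N * Nᴴ
        = (1 : Matrix (Fin n) (Fin n) ℂ) - (Nᴴ)ᴴ * Nᴴ := by
      rw [conjTranspose_conjTranspose]
    have e2 : (1 : Matrix (Fin n) (Fin n) ℂ) - M * Mᴴ
        = (1 : Matrix (Fin n) (Fin n) ℂ) - (Mᴴ)ᴴ * Mᴴ := by
      rw [conjTranspose_conjTranspose]
    rw [e1, e2, quad1, quad1, Complex.sub_re, Complex.sub_re, hMtv]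
    have h1 := cUt x
    have h2 := cVt (Nᴴ *ᵥ (Uᴴ *ᵥ x))
    linarith
  have hy' : (star (V *ᵥ y) ⬝ᵥ ((1 : Matrix (Fin n) (Fin n) ℂ) - Nᴴ * N) *ᵥ (V *ᵥ y)).re
      ≤ (star y ⬝ᵥ ((1 : Matrix (Fin n) (Fin n) ℂ) - Mᴴ * M) *ᵥ y).re := by
    rw [quad1, quad1, Complex.sub_re, Complex.sub_re, hMv]
    have h1 := cV y
    have h2 := cU (N *ᵥ (V *ᵥ y))
    linarith
  calc ‖star x ⬝ᵥ (U * Ntil * V - M) *ᵥ y‖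
      = ‖star (Uᴴ *ᵥ x) ⬝ᵥ (Ntil - N) *ᵥ (V *ᵥ y)‖ := by rw [hlhs]
    _ ≤ ε / 4 * ((star (Uᴴ *ᵥ x) ⬝ᵥ ((1 : Matrix (Fin n) (Fin n) ℂ) - N * Nᴴ) *ᵥ (Uᴴ *ᵥ x)).re
        + (star (V *ᵥ y) ⬝ᵥ ((1 : Matrix (Fin n) (Fin n) ℂ) - Nᴴ * N) *ᵥ (V *ᵥ y)).re) := hb
    _ ≤ ε / 4 * ((star x ⬝ᵥ ((1 : Matrix (Fin n) (Fin n) ℂ) - M * Mᴴ) *ᵥ x).re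
        + (star y ⬝ᵥ ((1 : Matrix (Fin n) (Fin n) ℂ) - Mᴴ * M) *ᵥ y).re) := by
      apply mul_le_mul_of_nonneg_left (by linarith) (by linarith)
end

section
/- Let N, Ñ ∈ ℂ^{n×n} and ε ≥ 0. Suppose that for every pair of unitary matrices U, V ∈ ℂ^{n×n}, the matrix U·Ñ·V is a standard (ε/2)-approximation of U·N·V with respect to degree matrix I, i.e. I − S_{UNV} is positive semidefinite and for all x, y ∈ ℂⁿ, |x*(U·Ñ·V − U·N·V)y| ≤ (ε/4)·(x*(I − S_{UNV})x + y*(I − S_{UNV})y), where S_M := (M + M*)/2. Then Ñ is an ε-normalized-SV approximation of N. -/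
open Matrix ComplexOrder

/-- The symmetrization `S_M := (M + M*)/2`. -/
noncomputable def symPart {n : ℕ} (M : Matrix (Fin n) (Fin n) ℂ) :
    Matrix (Fin n) (Fin n) ℂ :=
  (2 : ℂ)⁻¹ • (M + Mᴴ)


open Matrix ComplexOrder Filter Polynomial in
private lemma psd_of_tendsto' {n : ℕ} {M : ℕ → Matrix (Fin n) (Fin n) ℂ}
    {L : Matrix (Fin n) (Fin n) ℂ}
    (hM : ∀ k, (M k).PosSemidef) (hL : Tendsto M atTop (nhds L)) : L.PosSemidef := by
  refine posSemidef_iff_dotProduct_mulVec.mpr ⟨?_, ?_⟩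
  · have h1 : Tendsto (fun k => (M k)ᴴ) atTop (nhds Lᴴ) :=
      ((continuous_id.matrix_conjTranspose).tendsto L).comp hL
    have h2 : (fun k => (M k)ᴴ) = M := by funext k; exact (hM k).isHermitian
    rw [h2] at h1
    exact tendsto_nhds_unique h1 hL
  · intro x
    have hcont : Continuous fun A : Matrix (Fin n) (Fin n) ℂ => star x ⬝ᵥ A *ᵥ x :=
      continuous_const.dotProduct (continuous_id.matrix_mulVec continuous_const)
    have hc : Tendsto (fun k => star x ⬝ᵥ (M k) *ᵥ x) atTop (nhds (star x ⬝ᵥ L *ᵥ x)) :=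
      (hcont.tendsto L).comp hL
    have hclosed : IsClosed {z : ℂ | 0 ≤ z} := by
      have : {z : ℂ | 0 ≤ z} = Complex.re ⁻¹' (Set.Ici 0) ∩ Complex.im ⁻¹' {0} := by
        ext z; simp [Complex.le_def, Set.mem_inter_iff, eq_comm]
      rw [this]
      exact (isClosed_Ici.preimage Complex.continuous_re).inter
        (isClosed_singleton.preimage Complex.continuous_im)
    exact hclosed.mem_of_tendsto hc (Eventually.of_forall fun k => (hM k).dotProduct_mulVec_nonneg x)

open Matrix ComplexOrder Filter in
private lemma unitary_set_compact' {n : ℕ} :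
    IsCompact {W : Matrix (Fin n) (Fin n) ℂ | Wᴴ * W = 1} := by
  have hS : IsCompact (Set.pi Set.univ fun _ : Fin n =>
      (Set.pi Set.univ fun _ : Fin n => Metric.closedBall (0:ℂ) 1)) :=
    isCompact_univ_pi fun _ => isCompact_univ_pi fun _ => isCompact_closedBall _ _
  apply hS.of_isClosed_subset
  · have : {W : Matrix (Fin n) (Fin n) ℂ | Wᴴ * W = 1} =
        (fun W : Matrix (Fin n) (Fin n) ℂ => Wᴴ * W) ⁻¹' {1} := rfl
    rw [this]
    exact isClosed_singleton.preimage
      (continuous_id.matrix_conjTranspose.matrix_mul continuous_id)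
  · intro W hW
    intro i _ j _
    simp only [Metric.mem_closedBall, dist_zero_right]
    have hcol : ∑ k, Complex.normSq (W k j) = 1 := by
      have key : ∀ W : Matrix (Fin n) (Fin n) ℂ, Wᴴ * W = 1 →
          ∑ k, Complex.normSq (W k j) = 1 := by
        intro W hW
        have := congrFun (congrFun hW j) j
        simp only [Matrix.mul_apply, Matrix.one_apply_eq, Matrix.conjTranspose_apply] at this
        have := congrArg Complex.re this
        simpa [Complex.normSq, Complex.mul_re, Complex.normSq_apply] using this
      exact key W hW
    have h1 : Complex.normSq (W i j) ≤ 1 := by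
      rw [← hcol]
      exact Finset.single_le_sum (f := fun k => Complex.normSq (W k j))
        (fun k _ => Complex.normSq_nonneg _) (Finset.mem_univ i)
    have : ‖W i j‖ ^ 2 ≤ 1 := by rwa [← Complex.sq_norm] at h1
    nlinarith [norm_nonneg (W i j)]

open scoped MatrixOrder in
open Matrix ComplexOrder Filter in
private lemma exists_polar_of_isUnit' {n : ℕ} (A : Matrix (Fin n) (Fin n) ℂ)
    (hA : IsUnit A.det) :
    ∃ W : Matrix (Fin n) (Fin n) ℂ, Wᴴ * W = 1 ∧ (Wᴴ * A).PosSemidef := by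
  have hP : (Aᴴ * A).PosSemidef := posSemidef_conjTranspose_mul_self A
  set S := CFC.sqrt (Aᴴ * A) with hSdef
  have hSpsd : S.PosSemidef := nonneg_iff_posSemidef.mp (CFC.sqrt_nonneg _)
  have hSS : S * S = Aᴴ * A := CFC.sqrt_mul_sqrt_self _ hP.nonneg
  have hSH : Sᴴ = S := hSpsd.isHermitian
  have hSdet : IsUnit S.det := by
    have h1 : S.det * S.det = Aᴴ.det * A.det := by
      rw [← Matrix.det_mul, hSS, Matrix.det_mul]
    have hAH : IsUnit Aᴴ.det := by
      rw [Matrix.det_conjTranspose]; exact (isUnit_star (a := A.det)).mpr hA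
    have h2 := hAH.mul hA
    rw [← h1] at h2
    exact isUnit_of_mul_isUnit_left h2
  have hWH : (A * S⁻¹)ᴴ = S⁻¹ * Aᴴ := by
    rw [Matrix.conjTranspose_mul, Matrix.conjTranspose_nonsing_inv, hSH]
  refine ⟨A * S⁻¹, ?_, ?_⟩
  · rw [hWH]
    calc S⁻¹ * Aᴴ * (A * S⁻¹) = S⁻¹ * (Aᴴ * A) * S⁻¹ := by
          simp only [Matrix.mul_assoc]
      _ = (S⁻¹ * S) * (S * S⁻¹) := by
          rw [← hSS, Matrix.mul_assoc, Matrix.mul_assoc, Matrix.mul_assoc]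
      _ = 1 := by
          rw [Matrix.nonsing_inv_mul _ hSdet, Matrix.mul_nonsing_inv _ hSdet, Matrix.one_mul]
  · have : (A * S⁻¹)ᴴ * A = S := by
      rw [hWH, Matrix.mul_assoc, ← hSS, ← Matrix.mul_assoc, Matrix.nonsing_inv_mul _ hSdet,
        Matrix.one_mul]
    rw [this]; exact hSpsd

open Matrix ComplexOrder Filter Polynomial in
private lemma charpoly_eval' {n : ℕ} (A : Matrix (Fin n) (Fin n) ℂ) (t : ℂ) :
    (A.charpoly).eval t = (t • 1 - A).det := by
  rw [Matrix.charpoly, eval_det, Matrix.matPolyEquiv_charmatrix]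
  simp only [eval_sub, eval_X, eval_C, Matrix.smul_one_eq_diagonal]
  congr 1

open Matrix ComplexOrder Filter Polynomial in
private lemma finite_bad' {n : ℕ} (A : Matrix (Fin n) (Fin n) ℂ) :
    {t : ℝ | ¬ IsUnit (A - (t:ℂ) • 1).det}.Finite := by
  have hsub : {t : ℝ | ¬ IsUnit (A - (t:ℂ) • 1).det} ⊆
      Complex.ofReal ⁻¹' {z : ℂ | (A.charpoly).IsRoot z} := by
    intro t ht
    simp only [Set.mem_setOf_eq, isUnit_iff_ne_zero, not_not] at ht
    simp only [Set.mem_preimage, Set.mem_setOf_eq, IsRoot, charpoly_eval']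
    have : ((t:ℂ) • 1 - A) = -(A - (t:ℂ) • 1) := by rw [neg_sub]
    rw [this, Matrix.det_neg, ht, mul_zero]
  have hroots : {z : ℂ | (A.charpoly).IsRoot z}.Finite :=
    Polynomial.finite_setOf_isRoot (A.charpoly_monic.ne_zero)
  exact (hroots.preimage (Function.Injective.injOn Complex.ofReal_injective)).subset hsub

open Matrix ComplexOrder Filter Polynomial in
set_option maxHeartbeats 2000000 in
private lemma exists_polar' {n : ℕ} (A : Matrix (Fin n) (Fin n) ℂ) :
    ∃ W : Matrix (Fin n) (Fin n) ℂ, Wᴴ * W = 1 ∧ (Wᴴ * A).PosSemidef := by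
  have hsel : ∀ k : ℕ, ∃ t : ℝ, t ∈ Set.Ioc (0:ℝ) (1/(k+1)) ∧ IsUnit (A - (t:ℂ) • 1).det := by
    intro k
    have hio : (Set.Ioc (0:ℝ) (1/(k+1))).Infinite := Set.Ioc_infinite (by positivity)
    obtain ⟨t, ht⟩ := (hio.diff (finite_bad' A)).nonempty
    exact ⟨t, ht.1, not_not.mp ht.2⟩
  choose t ht hunit using hsel
  set Aseq : ℕ → Matrix (Fin n) (Fin n) ℂ := fun k => A - (t k : ℂ) • 1 with hAseq
  have htend : Tendsto t atTop (nhds 0) := by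
    have h0 : Tendsto (fun _ : ℕ => (0:ℝ)) atTop (nhds 0) := tendsto_const_nhds
    have h1 : Tendsto (fun k : ℕ => 1/((k:ℝ)+1)) atTop (nhds 0) :=
      tendsto_one_div_add_atTop_nhds_zero_nat
    exact tendsto_of_tendsto_of_tendsto_of_le_of_le h0 h1
      (fun k => (ht k).1.le) (fun k => (ht k).2)
  have hAtend : Tendsto Aseq atTop (nhds A) := by
    have h1 : Tendsto (fun k => ((t k : ℂ))) atTop (nhds 0) :=
      (Complex.continuous_ofReal.tendsto 0).comp htend |>.congr (fun _ => rfl)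
        |>.mono_right (by simp)
    have h2 : Tendsto (fun k => ((t k : ℂ)) • (1 : Matrix (Fin n) (Fin n) ℂ)) atTop
        (nhds ((0:ℂ) • 1)) := h1.smul tendsto_const_nhds
    have h3 := (tendsto_const_nhds (x := A) (f := atTop)).sub h2
    simpa [hAseq] using h3
  choose W hW hpsd using fun k => exists_polar_of_isUnit' (Aseq k) (hunit k)
  haveI : FirstCountableTopology (Matrix (Fin n) (Fin n) ℂ) :=
    inferInstanceAs (FirstCountableTopology (Fin n → Fin n → ℂ))
  obtain ⟨Wl, hWl, φ, hφ, hWtend⟩ := unitary_set_compact'.tendsto_subseq (x := W) hW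
  refine ⟨Wl, hWl, ?_⟩
  have hmul : Tendsto (fun k => (W (φ k))ᴴ * Aseq (φ k)) atTop (nhds (Wlᴴ * A)) := by
    have hconj : Tendsto (fun k => (W (φ k))ᴴ) atTop (nhds Wlᴴ) :=
      ((continuous_id.matrix_conjTranspose).tendsto Wl).comp hWtend
    have hA' : Tendsto (fun k => Aseq (φ k)) atTop (nhds A) := hAtend.comp hφ.tendsto_atTop
    exact hconj.mul hA'
  exact psd_of_tendsto' (fun k => hpsd (φ k)) hmul

open Matrix ComplexOrder in
private lemma dot_conj' {n : ℕ} (W M : Matrix (Fin n) (Fin n) ℂ) (hW : W * Wᴴ = 1)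
    (x y : Fin n → ℂ) :
    star (Wᴴ *ᵥ x) ⬝ᵥ (Wᴴ * M) *ᵥ y = star x ⬝ᵥ M *ᵥ y := by
  rw [Matrix.star_mulVec, Matrix.conjTranspose_conjTranspose, Matrix.dotProduct_mulVec,
    Matrix.vecMul_vecMul, ← Matrix.mul_assoc, hW, Matrix.one_mul, ← Matrix.dotProduct_mulVec]

open Matrix ComplexOrder in
private lemma dot_conj2' {n : ℕ} (W P : Matrix (Fin n) (Fin n) ℂ) (x : Fin n → ℂ) :
    star (Wᴴ *ᵥ x) ⬝ᵥ P *ᵥ (Wᴴ *ᵥ x) = star x ⬝ᵥ (W * P * Wᴴ) *ᵥ x := by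
  rw [Matrix.star_mulVec, Matrix.conjTranspose_conjTranspose, Matrix.mulVec_mulVec,
    Matrix.dotProduct_mulVec, Matrix.vecMul_vecMul, ← Matrix.dotProduct_mulVec,
    ← Matrix.mul_assoc]

open Matrix ComplexOrder in
private lemma re_nonneg_of_psd' {n : ℕ} {P : Matrix (Fin n) (Fin n) ℂ} (hP : P.PosSemidef)
    (x : Fin n → ℂ) : 0 ≤ (star x ⬝ᵥ P *ᵥ x).re := by
  have := hP.dotProduct_mulVec_nonneg x
  rw [Complex.le_def] at this
  simpa using this.1

set_option maxHeartbeats 2000000 in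
open scoped MatrixOrder in
/-- if for every pair of unitary matrices `U`, `V` the matrix `U·Ñ·V` is a
standard `ε/2`-approximation of `U·N·V` with respect to the degree matrix `I`, then `Ñ`
is an `ε`-normalized-SV approximation of `N`. -/
theorem stmt_7 {n : ℕ} (N Ntil : Matrix (Fin n) (Fin n) ℂ) (ε : ℝ) (hε : 0 ≤ ε)
    (h : ∀ U V : Matrix (Fin n) (Fin n) ℂ,
      Uᴴ * U = 1 → U * Uᴴ = 1 → Vᴴ * V = 1 → V * Vᴴ = 1 →
      ((1 : Matrix (Fin n) (Fin n) ℂ) - symPart (U * N * V)).PosSemidef ∧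
      ∀ x y : Fin n → ℂ,
        ‖star x ⬝ᵥ (U * Ntil * V - U * N * V).mulVec y‖ ≤
          ε / 4 *
            ((star x ⬝ᵥ ((1 : Matrix (Fin n) (Fin n) ℂ) - symPart (U * N * V)).mulVec x).re +
             (star y ⬝ᵥ ((1 : Matrix (Fin n) (Fin n) ℂ) - symPart (U * N * V)).mulVec y).re)) :
    IsNSVApprox ε N Ntil := by
  obtain ⟨W, hWU, hH⟩ := exists_polar' N
  have hWW : W * Wᴴ = 1 := mul_eq_one_comm.mp hWU
  set H := Wᴴ * N with hHdef
  obtain ⟨h1, h2⟩ := h Wᴴ 1 (by rw [Matrix.conjTranspose_conjTranspose]; exact hWW)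
    (by rw [Matrix.conjTranspose_conjTranspose]; exact hWU) (by simp) (by simp)
  have hsym : symPart (Wᴴ * N * 1) = H := by
    rw [Matrix.mul_one, ← hHdef]
    unfold symPart
    rw [hH.isHermitian.eq, ← two_smul ℂ H, smul_smul]
    norm_num
  rw [hsym] at h1 h2
  have hdm : Wᴴ * Ntil * 1 - Wᴴ * N * 1 = Wᴴ * (Ntil - N) := by
    rw [Matrix.mul_one, Matrix.mul_one, Matrix.mul_sub]
  rw [hdm] at h2
  set S := CFC.sqrt H with hSdef
  have hSS : S * S = H := CFC.sqrt_mul_sqrt_self _ hH.nonneg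
  have hSH : Sᴴ = S := (nonneg_iff_posSemidef.mp (CFC.sqrt_nonneg H)).isHermitian
  have hK1 : (H - H * H).PosSemidef := by
    have e : S * (1 - H) * Sᴴ = H - H * H := by
      rw [hSH, Matrix.mul_sub, Matrix.mul_one, Matrix.sub_mul, hSS]
      congr 1
      rw [← hSS]
      simp only [Matrix.mul_assoc]
    have := h1.mul_mul_conjTranspose_same S
    rwa [e] at this
  have hHH : ((1 : Matrix (Fin n) (Fin n) ℂ) - H * H).PosSemidef := by
    have := h1.add hK1
    rwa [sub_add_sub_cancel] at this
  have hNN : Nᴴ * N = H * H := by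
    calc Nᴴ * N = Nᴴ * (W * Wᴴ) * N := by rw [hWW, Matrix.mul_one]
      _ = (Wᴴ * N)ᴴ * (Wᴴ * N) := by
          rw [Matrix.conjTranspose_mul, Matrix.conjTranspose_conjTranspose]
          simp only [Matrix.mul_assoc]
      _ = H * H := by rw [← hHdef, hH.isHermitian.eq]
  have hNW : N = W * H := by rw [hHdef, ← Matrix.mul_assoc, hWW, Matrix.one_mul]
  have hNNh : N * Nᴴ = W * (H * H) * Wᴴ := by
    rw [hNW, Matrix.conjTranspose_mul, hH.isHermitian.eq]
    simp only [Matrix.mul_assoc]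
  have key1 : (1 : Matrix (Fin n) (Fin n) ℂ) - N * Nᴴ = W * (1 - H * H) * Wᴴ := by
    rw [hNNh, Matrix.mul_sub, Matrix.mul_one, Matrix.sub_mul, hWW]
  have hsplit : (1 : Matrix (Fin n) (Fin n) ℂ) - H * H = (1 - H) + (H - H * H) :=
    (sub_add_sub_cancel _ _ _).symm
  refine ⟨?_, ?_, ?_⟩
  · rw [key1]; exact hHH.mul_mul_conjTranspose_same W
  · rw [hNN]; exact hHH
  · intro x y
    have hb := h2 (Wᴴ *ᵥ x) y
    rw [dot_conj' W (Ntil - N) hWW x y, dot_conj2' W (1 - H) x] at hb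
    refine le_trans hb ?_
    have hxle : (star x ⬝ᵥ (W * (1 - H) * Wᴴ) *ᵥ x).re ≤
        (star x ⬝ᵥ ((1 : Matrix (Fin n) (Fin n) ℂ) - N * Nᴴ) *ᵥ x).re := by
      have hed : (1 : Matrix (Fin n) (Fin n) ℂ) - N * Nᴴ =
          W * (1 - H) * Wᴴ + W * (H - H * H) * Wᴴ := by
        rw [key1, hsplit, Matrix.mul_add, Matrix.add_mul]
      rw [hed, Matrix.add_mulVec, dotProduct_add, Complex.add_re]
      have := re_nonneg_of_psd' (hK1.mul_mul_conjTranspose_same W) x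
      linarith
    have hyle : (star y ⬝ᵥ ((1 : Matrix (Fin n) (Fin n) ℂ) - H) *ᵥ y).re ≤
        (star y ⬝ᵥ ((1 : Matrix (Fin n) (Fin n) ℂ) - Nᴴ * N) *ᵥ y).re := by
      rw [hNN, hsplit, Matrix.add_mulVec, dotProduct_add, Complex.add_re]
      have := re_nonneg_of_psd' hK1 y
      linarith
    exact mul_le_mul_of_nonneg_left (add_le_add hxle hyle) (by positivity)
end

section
/- There exist constants C > 0 and ε₀ ∈ (0, 1] such that the following holds. For every n ≥ 1, every ℓ ≥ 1, every ε with 0 ≤ ε ≤ ε₀, and all matrices N₁, …, N_ℓ, Ñ₁, …, Ñ_ℓ ∈ ℂ^{n×n} such that Ñᵢ is an ε-normalized-SV approximation of Nᵢ for each i ∈ {1, …, ℓ}, the product Ñ_ℓ·Ñ_{ℓ−1}···Ñ₁ is an (ε + C·ε²)-normalized-SV approximation of N_ℓ·N_{ℓ−1}···N₁. -/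
open Matrix ComplexOrder

/-- The ordered product `M_ℓ · M_{ℓ−1} ··· M₁` of a family `M : Fin ℓ → Matrix`, where
`M i` plays the role of `M_{i+1}`. -/
noncomputable def orderedProd {n ℓ : ℕ} (M : Fin ℓ → Matrix (Fin n) (Fin n) ℂ) :
    Matrix (Fin n) (Fin n) ℂ :=
  (List.ofFn M).reverse.prod


namespace SVAux

variable {n : ℕ}

noncomputable def ip (x y : Fin n → ℂ) : ℂ := star x ⬝ᵥ y
noncomputable def nsq (x : Fin n → ℂ) : ℝ := (ip x x).re

lemma ip_self_im (x : Fin n → ℂ) : (ip x x).im = 0 := by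
  simp [ip, dotProduct, Complex.im_sum, mul_comm]

lemma ip_self_eq (x : Fin n → ℂ) : ip x x = ((nsq x : ℝ) : ℂ) := by
  apply Complex.ext <;> simp [nsq, ip_self_im]

lemma nsq_nonneg (x : Fin n → ℂ) : 0 ≤ nsq x := by
  unfold nsq ip
  rw [dotProduct, Complex.re_sum]
  apply Finset.sum_nonneg
  intro i _
  rw [mul_comm]
  simp only [Pi.star_apply, Complex.star_def, Complex.mul_conj, Complex.ofReal_re]
  exact Complex.normSq_nonneg _

lemma ip_adj (A : Matrix (Fin n) (Fin n) ℂ) (x y : Fin n → ℂ) :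
    ip x (A *ᵥ y) = ip (Aᴴ *ᵥ x) y := by
  unfold ip
  rw [Matrix.star_mulVec, Matrix.conjTranspose_conjTranspose, Matrix.dotProduct_mulVec]

lemma ip_sub_left (x y z : Fin n → ℂ) : ip (x - y) z = ip x z - ip y z := by
  unfold ip; rw [star_sub, sub_dotProduct]

lemma ip_sub_right (x y z : Fin n → ℂ) : ip x (y - z) = ip x y - ip x z := by
  unfold ip; rw [dotProduct_sub]

lemma ip_add_left (x y z : Fin n → ℂ) : ip (x + y) z = ip x z + ip y z := by
  unfold ip; rw [star_add, add_dotProduct]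

lemma ip_add_right (x y z : Fin n → ℂ) : ip x (y + z) = ip x y + ip x z := by
  unfold ip; rw [dotProduct_add]

lemma ip_conj (x y : Fin n → ℂ) : ip y x = star (ip x y) := by
  unfold ip
  rw [← Matrix.star_dotProduct_star, star_star]

lemma nsq_sub (x y : Fin n → ℂ) : nsq (x - y) = nsq x + nsq y - 2 * (ip x y).re := by
  unfold nsq
  rw [ip_sub_left, ip_sub_right, ip_sub_right, ip_conj y x]
  simp only [Complex.sub_re, Complex.add_re, Complex.conj_re, Complex.star_def]
  ring

lemma nsq_add (x y : Fin n → ℂ) : nsq (x + y) = nsq x + nsq y + 2 * (ip x y).re := by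
  unfold nsq
  rw [ip_add_left, ip_add_right, ip_add_right, ip_conj y x]
  simp only [Complex.add_re, Complex.conj_re, Complex.star_def]
  ring

noncomputable def quadL (A : Matrix (Fin n) (Fin n) ℂ) (x : Fin n → ℂ) : ℝ :=
  nsq x - nsq (Aᴴ *ᵥ x)

noncomputable def quadR (A : Matrix (Fin n) (Fin n) ℂ) (y : Fin n → ℂ) : ℝ :=
  nsq y - nsq (A *ᵥ y)

lemma quad_eq_L (A : Matrix (Fin n) (Fin n) ℂ) (x : Fin n → ℂ) :
    star x ⬝ᵥ (((1 : Matrix (Fin n) (Fin n) ℂ) - A * Aᴴ) *ᵥ x) = ((quadL A x : ℝ) : ℂ) := by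
  show ip x _ = _
  rw [Matrix.sub_mulVec, Matrix.one_mulVec, ip_sub_right, ← Matrix.mulVec_mulVec,
    ip_adj, ip_self_eq, ip_self_eq]
  unfold quadL
  push_cast
  ring

lemma quad_eq_R (A : Matrix (Fin n) (Fin n) ℂ) (y : Fin n → ℂ) :
    star y ⬝ᵥ (((1 : Matrix (Fin n) (Fin n) ℂ) - Aᴴ * A) *ᵥ y) = ((quadR A y : ℝ) : ℂ) := by
  show ip y _ = _
  rw [Matrix.sub_mulVec, Matrix.one_mulVec, ip_sub_right, ← Matrix.mulVec_mulVec,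
    ip_adj, Matrix.conjTranspose_conjTranspose, ip_self_eq, ip_self_eq]
  unfold quadR
  push_cast
  ring

/-- Reformulation of `IsNSVApprox` in terms of real quadratic forms. -/
def Good (ε : ℝ) (A Atil : Matrix (Fin n) (Fin n) ℂ) : Prop :=
  (∀ x, 0 ≤ quadL A x) ∧ (∀ y, 0 ≤ quadR A y) ∧
    ∀ x y, ‖ip x ((Atil - A) *ᵥ y)‖ ≤ ε / 4 * (quadL A x + quadR A y)

lemma isNSV_iff_good (ε : ℝ) (A Atil : Matrix (Fin n) (Fin n) ℂ) :
    IsNSVApprox ε A Atil ↔ Good ε A Atil := by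
  constructor
  · rintro ⟨h1, h2, h3⟩
    refine ⟨fun x => ?_, fun y => ?_, fun x y => ?_⟩
    · have := h1.dotProduct_mulVec_nonneg x
      rw [quad_eq_L] at this
      exact_mod_cast this
    · have := h2.dotProduct_mulVec_nonneg y
      rw [quad_eq_R] at this
      exact_mod_cast this
    · have := h3 x y
      rwa [quad_eq_L, quad_eq_R, Complex.ofReal_re, Complex.ofReal_re] at this
  · rintro ⟨h1, h2, h3⟩
    refine ⟨posSemidef_iff_dotProduct_mulVec.mpr ⟨?_, fun x => ?_⟩,
      posSemidef_iff_dotProduct_mulVec.mpr ⟨?_, fun y => ?_⟩, fun x y => ?_⟩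
    · simp [Matrix.IsHermitian, Matrix.conjTranspose_sub, Matrix.conjTranspose_mul]
    · rw [quad_eq_L]
      exact_mod_cast h1 x
    · simp [Matrix.IsHermitian, Matrix.conjTranspose_sub, Matrix.conjTranspose_mul]
    · rw [quad_eq_R]
      exact_mod_cast h2 y
    · rw [quad_eq_L, quad_eq_R, Complex.ofReal_re, Complex.ofReal_re]
      exact h3 x y

lemma lemC (A : Matrix (Fin n) (Fin n) ℂ) (u : Fin n → ℂ) :
    quadR A (Aᴴ *ᵥ u) ≤ quadL A u := by
  have h0 : 0 ≤ nsq (u - A *ᵥ (Aᴴ *ᵥ u)) := nsq_nonneg _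
  rw [nsq_sub] at h0
  have hip : (ip u (A *ᵥ (Aᴴ *ᵥ u))).re = nsq (Aᴴ *ᵥ u) := by
    rw [ip_adj]; rfl
  rw [hip] at h0
  unfold quadR quadL
  linarith

lemma quadR_nsq (A : Matrix (Fin n) (Fin n) ℂ) (d : Fin n → ℂ) : quadR A d ≤ nsq d := by
  unfold quadR
  linarith [nsq_nonneg (A *ᵥ d)]

lemma quadR_par (A : Matrix (Fin n) (Fin n) ℂ) (w d : Fin n → ℂ)
    (h : 0 ≤ quadR A (w - d)) : quadR A (w + d) ≤ 2 * quadR A w + 2 * quadR A d := by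
  unfold quadR at *
  rw [Matrix.mulVec_add, Matrix.mulVec_sub, nsq_add, nsq_sub, nsq_add, nsq_sub] at *
  linarith

lemma lemB {ε : ℝ} {A Atil : Matrix (Fin n) (Fin n) ℂ} (hg : Good ε A Atil)
    (hε0 : 0 ≤ ε) (hε1 : ε ≤ 1) (u : Fin n → ℂ) :
    nsq ((Atil - A)ᴴ *ᵥ u) ≤ ε / 3 * quadL A u := by
  set d := (Atil - A)ᴴ *ᵥ u with hd
  have h1 : nsq d = (ip u ((Atil - A) *ᵥ d)).re := by
    rw [ip_adj]; rfl
  have h2 : nsq d ≤ ε / 4 * (quadL A u + quadR A d) := by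
    rw [h1]
    exact le_trans (Complex.re_le_norm _) (hg.2.2 u d)
  have h3 : quadR A d ≤ nsq d := quadR_nsq A d
  have hL := hg.1 u
  nlinarith [nsq_nonneg d]

lemma diff_id (A Atil : Matrix (Fin n) (Fin n) ℂ) (u : Fin n → ℂ) :
    nsq (Atilᴴ *ᵥ u) - nsq (Aᴴ *ᵥ u) =
      (ip u ((Atil - A) *ᵥ (Atilᴴ *ᵥ u))).re + (ip u ((Atil - A) *ᵥ (Aᴴ *ᵥ u))).re := by
  have h1 : ip u ((Atil - A) *ᵥ (Atilᴴ *ᵥ u)) =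
      ip (Atilᴴ *ᵥ u) (Atilᴴ *ᵥ u) - ip (Aᴴ *ᵥ u) (Atilᴴ *ᵥ u) := by
    rw [ip_adj, Matrix.conjTranspose_sub, Matrix.sub_mulVec, ip_sub_left]
  have h2 : ip u ((Atil - A) *ᵥ (Aᴴ *ᵥ u)) =
      ip (Atilᴴ *ᵥ u) (Aᴴ *ᵥ u) - ip (Aᴴ *ᵥ u) (Aᴴ *ᵥ u) := by
    rw [ip_adj, Matrix.conjTranspose_sub, Matrix.sub_mulVec, ip_sub_left]
  rw [h1, h2]
  have h3 : (ip (Aᴴ *ᵥ u) (Atilᴴ *ᵥ u)).re = (ip (Atilᴴ *ᵥ u) (Aᴴ *ᵥ u)).re := by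
    rw [ip_conj]
    simp [Complex.star_def]
  simp only [Complex.sub_re]
  unfold nsq
  linarith

lemma lemD {ε : ℝ} {A Atil : Matrix (Fin n) (Fin n) ℂ} (hg : Good ε A Atil)
    (hε0 : 0 ≤ ε) (hε1 : ε ≤ 1/10) (u : Fin n → ℂ) :
    0 ≤ nsq u - nsq (Atilᴴ *ᵥ u) ∧
      quadL A u ≤ (1 + 2 * ε) * (nsq u - nsq (Atilᴴ *ᵥ u)) := by
  have hid := diff_id A Atil u
  have e1 : (ip u ((Atil - A) *ᵥ (Atilᴴ *ᵥ u))).re ≤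
      ε / 4 * (quadL A u + quadR A (Atilᴴ *ᵥ u)) :=
    le_trans (Complex.re_le_norm _) (hg.2.2 u _)
  have e2 : (ip u ((Atil - A) *ᵥ (Aᴴ *ᵥ u))).re ≤
      ε / 4 * (quadL A u + quadR A (Aᴴ *ᵥ u)) :=
    le_trans (Complex.re_le_norm _) (hg.2.2 u _)
  have hC : quadR A (Aᴴ *ᵥ u) ≤ quadL A u := lemC A u
  have hsplit : Atilᴴ *ᵥ u = (Aᴴ *ᵥ u) + ((Atil - A)ᴴ *ᵥ u) := by
    rw [Matrix.conjTranspose_sub, Matrix.sub_mulVec]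
    abel
  have hpar : quadR A (Atilᴴ *ᵥ u) ≤
      2 * quadR A (Aᴴ *ᵥ u) + 2 * quadR A ((Atil - A)ᴴ *ᵥ u) := by
    rw [hsplit]
    exact quadR_par A _ _ (hg.2.1 _)
  have hdB : nsq ((Atil - A)ᴴ *ᵥ u) ≤ ε / 3 * quadL A u :=
    lemB hg hε0 (by linarith) u
  have hdq : quadR A ((Atil - A)ᴴ *ᵥ u) ≤ nsq ((Atil - A)ᴴ *ᵥ u) := quadR_nsq A _
  have hL0 : 0 ≤ quadL A u := hg.1 u
  set b := nsq u - nsq (Atilᴴ *ᵥ u) with hb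
  set L := quadL A u with hLdef
  have hrel : L - b = nsq (Atilᴴ *ᵥ u) - nsq (Aᴴ *ᵥ u) := by
    rw [hLdef]; unfold quadL; rw [hb]; ring
  have hM : L - b ≤ (5/4) * (ε * L) + (1/6) * (ε * (ε * L)) := by
    have hq4 : (0:ℝ) ≤ ε/4 := by linarith
    have m1 := mul_le_mul_of_nonneg_left hpar hq4
    have m2 := mul_le_mul_of_nonneg_left hC hq4
    have m3 := mul_le_mul_of_nonneg_left (le_trans hdq hdB) hq4
    nlinarith [hid, e1, e2]
  have hεL : ε * L ≤ (1/10) * L := by nlinarith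
  have hεεL : ε * (ε * L) ≤ (1/10) * (ε * L) := by
    have : 0 ≤ ε * L := mul_nonneg hε0 hL0
    nlinarith
  have hεLnn : 0 ≤ ε * L := mul_nonneg hε0 hL0
  constructor
  · nlinarith
  · nlinarith [mul_le_mul_of_nonneg_left hM hε0, hεL, hεεL, hεLnn,
      mul_nonneg hε0 hεLnn]

noncomputable def pp (M : ℕ → Matrix (Fin n) (Fin n) ℂ) : ℕ → Matrix (Fin n) (Fin n) ℂ
  | 0 => 1
  | k + 1 => M k * pp M k

lemma master {ε : ℝ} (hε0 : 0 ≤ ε) (hε1 : ε ≤ 1/10)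
    (N Nt : ℕ → Matrix (Fin n) (Fin n) ℂ) (h : ∀ k, Good ε (N k) (Nt k)) :
    ∀ ℓ : ℕ,
      (∀ x, 0 ≤ nsq x - nsq ((pp Nt ℓ)ᴴ *ᵥ x)) ∧
      (∀ x, 0 ≤ nsq x - nsq ((pp N ℓ)ᴴ *ᵥ x)) ∧
      (∀ y, 0 ≤ nsq y - nsq ((pp N ℓ) *ᵥ y)) ∧
      (∀ x y, ‖ip x ((pp Nt ℓ - pp N ℓ) *ᵥ y)‖ ≤
        ε / 4 * ((1 + 2 * ε) * (nsq x - nsq ((pp Nt ℓ)ᴴ *ᵥ x)) +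
          (nsq y - nsq ((pp N ℓ) *ᵥ y)))) := by
  intro ℓ
  induction ℓ with
  | zero =>
    refine ⟨fun x => ?_, fun x => ?_, fun y => ?_, fun x y => ?_⟩ <;>
      simp [pp, ip, Matrix.one_mulVec]
  | succ ℓ IH =>
    obtain ⟨IH1, IH2, IH3, IH4⟩ := IH
    have hstep := h ℓ
    have hppt : pp Nt (ℓ + 1) = Nt ℓ * pp Nt ℓ := rfl
    have hppn : pp N (ℓ + 1) = N ℓ * pp N ℓ := rfl
    have hadjT : ∀ x, (pp Nt (ℓ + 1))ᴴ *ᵥ x = (pp Nt ℓ)ᴴ *ᵥ ((Nt ℓ)ᴴ *ᵥ x) := by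
      intro x
      rw [hppt, Matrix.conjTranspose_mul, ← Matrix.mulVec_mulVec]
    have hadjN : ∀ x, (pp N (ℓ + 1))ᴴ *ᵥ x = (pp N ℓ)ᴴ *ᵥ ((N ℓ)ᴴ *ᵥ x) := by
      intro x
      rw [hppn, Matrix.conjTranspose_mul, ← Matrix.mulVec_mulVec]
    have hmulN : ∀ y, (pp N (ℓ + 1)) *ᵥ y = N ℓ *ᵥ ((pp N ℓ) *ᵥ y) := by
      intro y
      rw [hppn, ← Matrix.mulVec_mulVec]
    refine ⟨fun x => ?_, fun x => ?_, fun y => ?_, fun x y => ?_⟩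
    · rw [hadjT]
      have h1 := (lemD hstep hε0 hε1 x).1
      have h2 := IH1 ((Nt ℓ)ᴴ *ᵥ x)
      linarith
    · rw [hadjN]
      have h1 : 0 ≤ quadL (N ℓ) x := hstep.1 x
      have h2 := IH2 ((N ℓ)ᴴ *ᵥ x)
      unfold quadL at h1
      linarith
    · rw [hmulN]
      have h1 : 0 ≤ quadR (N ℓ) ((pp N ℓ) *ᵥ y) := hstep.2.1 _
      have h2 := IH3 y
      unfold quadR at h1
      linarith
    · have hsplitM : pp Nt (ℓ + 1) - pp N (ℓ + 1) =
          Nt ℓ * (pp Nt ℓ - pp N ℓ) + (Nt ℓ - N ℓ) * pp N ℓ := by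
        rw [hppt, hppn]
        noncomm_ring
      have hsplitv : (pp Nt (ℓ + 1) - pp N (ℓ + 1)) *ᵥ y =
          Nt ℓ *ᵥ ((pp Nt ℓ - pp N ℓ) *ᵥ y) + (Nt ℓ - N ℓ) *ᵥ ((pp N ℓ) *ᵥ y) := by
        rw [hsplitM, Matrix.add_mulVec, Matrix.mulVec_mulVec, Matrix.mulVec_mulVec]
      rw [hsplitv]
      have habs : ‖ip x (Nt ℓ *ᵥ ((pp Nt ℓ - pp N ℓ) *ᵥ y) +
            (Nt ℓ - N ℓ) *ᵥ ((pp N ℓ) *ᵥ y))‖ ≤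
          ‖ip ((Nt ℓ)ᴴ *ᵥ x) ((pp Nt ℓ - pp N ℓ) *ᵥ y)‖ +
          ‖ip x ((Nt ℓ - N ℓ) *ᵥ ((pp N ℓ) *ᵥ y))‖ := by
        rw [ip_add_right, ip_adj]
        exact norm_add_le _ _
      have t1 := IH4 ((Nt ℓ)ᴴ *ᵥ x) y
      have t2 := hstep.2.2 x ((pp N ℓ) *ᵥ y)
      have hD := lemD hstep hε0 hε1 x
      rw [hadjT, hmulN]
      have hY : quadR (N ℓ) ((pp N ℓ) *ᵥ y) =
          nsq ((pp N ℓ) *ᵥ y) - nsq (N ℓ *ᵥ ((pp N ℓ) *ᵥ y)) := rfl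
      have hIHX := IH1 ((Nt ℓ)ᴴ *ᵥ x)
      have hq4 : (0:ℝ) ≤ ε/4 := by linarith
      nlinarith [habs, t1, t2, hD.1, hD.2, hIHX,
        mul_le_mul_of_nonneg_left hD.2 hq4, IH3 y]


lemma arithE {ε Xt D : ℝ} (hε0 : 0 ≤ ε) (hε1 : ε ≤ 1/10) (hXt : 0 ≤ Xt) (hD0 : 0 ≤ D)
    (h : D ≤ ε / 4 * ((1 + 2 * ε) * Xt + D)) : D ≤ (2/5) * (ε * Xt) := by
  nlinarith [mul_nonneg hε0 hXt, mul_nonneg hε0 hD0, mul_nonneg (mul_nonneg hε0 hε0) hXt]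

lemma arith2 {ε X Xt Rt R q d : ℝ} (hε0 : 0 ≤ ε)
    (hkey : Xt - X ≤ ε / 4 * ((1 + 2 * ε) * Xt + Rt) + ε / 4 * ((1 + 2 * ε) * Xt + R))
    (hpar : Rt ≤ 2 * R + 2 * q) (hdq : q ≤ d) (hdE : d ≤ (2/5) * (ε * Xt)) (hC : R ≤ X) :
    Xt - X ≤ ε / 4 * ((1 + 2 * ε) * Xt + 2 * X + (4/5) * (ε * Xt)) +
      ε / 4 * ((1 + 2 * ε) * Xt + X) := by
  have hε4 : (0:ℝ) ≤ ε / 4 := by linarith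
  nlinarith [mul_le_mul_of_nonneg_left hpar hε4,
    mul_le_mul_of_nonneg_left (hdq.trans hdE) hε4, mul_le_mul_of_nonneg_left hC hε4]

lemma arithF {ε X Xt : ℝ} (hε0 : 0 ≤ ε) (hε1 : ε ≤ 1/10) (hX0 : 0 ≤ X) (hXt0 : 0 ≤ Xt)
    (h : Xt - X ≤ ε / 4 * ((1 + 2 * ε) * Xt + 2 * X + (4/5) * (ε * Xt)) +
      ε / 4 * ((1 + 2 * ε) * Xt + X)) : Xt ≤ (1 + 2 * ε) * X := by
  have hfrac : (1 - ε/2 - (6/5) * ε^2) * Xt ≤ (1 + (3/4) * ε) * X := by nlinarith [h]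
  have hpos : (0:ℝ) < 1 - ε/2 - (6/5) * ε^2 := by nlinarith
  have hpoly : (1 + (3/4) * ε) * X ≤ (1 - ε/2 - (6/5) * ε^2) * ((1 + 2 * ε) * X) := by
    nlinarith [hX0, mul_nonneg hε0 hX0, mul_nonneg (mul_nonneg hε0 hε0) hX0,
      mul_nonneg (mul_nonneg (mul_nonneg hε0 hε0) hε0) hX0]
  exact le_of_mul_le_mul_left (le_trans hfrac hpoly) hpos

lemma arithMain {ε X Xt Y L : ℝ} (hε0 : 0 ≤ ε) (hε1 : ε ≤ 1/10) (hX0 : 0 ≤ X)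
    (hY0 : 0 ≤ Y) (hXt0 : 0 ≤ Xt) (hF : Xt ≤ (1 + 2 * ε) * X)
    (hb : L ≤ ε / 4 * ((1 + 2 * ε) * Xt + Y)) :
    L ≤ (ε + 5 * ε ^ 2) / 4 * (X + Y) := by
  have hc : (0:ℝ) ≤ ε / 4 * (1 + 2 * ε) := by nlinarith
  have h1 := mul_le_mul_of_nonneg_left hF hc
  nlinarith [mul_nonneg (mul_nonneg hε0 hε0) hX0,
    mul_nonneg (mul_nonneg (mul_nonneg hε0 hε0) hε0) hX0,
    mul_nonneg (mul_nonneg hε0 hε0) hY0]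

lemma final {ε : ℝ} (hε0 : 0 ≤ ε) (hε1 : ε ≤ 1/10)
    (N Nt : ℕ → Matrix (Fin n) (Fin n) ℂ) (h : ∀ k, Good ε (N k) (Nt k)) (ℓ : ℕ) :
    Good (ε + 5 * ε ^ 2) (pp N ℓ) (pp Nt ℓ) := by
  obtain ⟨M1, M2, M3, M4⟩ := master hε0 hε1 N Nt h ℓ
  set P := pp N ℓ with hP
  set Pt := pp Nt ℓ with hPt
  have lemE : ∀ x, nsq ((Pt - P)ᴴ *ᵥ x) ≤ (2/5) * (ε * (nsq x - nsq (Ptᴴ *ᵥ x))) := by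
    intro x
    have h1 : nsq ((Pt - P)ᴴ *ᵥ x) = (ip x ((Pt - P) *ᵥ ((Pt - P)ᴴ *ᵥ x))).re := by
      rw [ip_adj]; rfl
    have h2 : nsq ((Pt - P)ᴴ *ᵥ x) ≤ ε / 4 * ((1 + 2 * ε) * (nsq x - nsq (Ptᴴ *ᵥ x)) +
        nsq ((Pt - P)ᴴ *ᵥ x)) := by
      have h2' := le_trans (Complex.re_le_norm _) (M4 x ((Pt - P)ᴴ *ᵥ x))
      rw [← h1] at h2'
      have h3 : 0 ≤ nsq (P *ᵥ ((Pt - P)ᴴ *ᵥ x)) := nsq_nonneg _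
      have hε4 : (0:ℝ) ≤ ε / 4 := by linarith
      nlinarith [mul_le_mul_of_nonneg_left h3 hε4]
    exact arithE hε0 hε1 (M1 x) (nsq_nonneg _) h2
  have lemF : ∀ x, nsq x - nsq (Ptᴴ *ᵥ x) ≤
      (1 + 2 * ε) * (nsq x - nsq (Pᴴ *ᵥ x)) := by
    intro x
    have hid := diff_id P Pt x
    have e1 : -(ε / 4 * ((1 + 2 * ε) * (nsq x - nsq (Ptᴴ *ᵥ x)) +
        (nsq (Ptᴴ *ᵥ x) - nsq (P *ᵥ (Ptᴴ *ᵥ x))))) ≤ (ip x ((Pt - P) *ᵥ (Ptᴴ *ᵥ x))).re :=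
      (abs_le.mp (le_trans (Complex.abs_re_le_norm _) (M4 x (Ptᴴ *ᵥ x)))).1
    have e2 : -(ε / 4 * ((1 + 2 * ε) * (nsq x - nsq (Ptᴴ *ᵥ x)) +
        (nsq (Pᴴ *ᵥ x) - nsq (P *ᵥ (Pᴴ *ᵥ x))))) ≤ (ip x ((Pt - P) *ᵥ (Pᴴ *ᵥ x))).re :=
      (abs_le.mp (le_trans (Complex.abs_re_le_norm _) (M4 x (Pᴴ *ᵥ x)))).1
    have hC : quadR P (Pᴴ *ᵥ x) ≤ quadL P x := lemC P x
    have hsplit : Ptᴴ *ᵥ x = (Pᴴ *ᵥ x) + ((Pt - P)ᴴ *ᵥ x) := by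
      rw [Matrix.conjTranspose_sub, Matrix.sub_mulVec]
      abel
    have hpar : quadR P (Ptᴴ *ᵥ x) ≤
        2 * quadR P (Pᴴ *ᵥ x) + 2 * quadR P ((Pt - P)ᴴ *ᵥ x) := by
      rw [hsplit]
      exact quadR_par P _ _ (M3 _)
    have hdq : quadR P ((Pt - P)ᴴ *ᵥ x) ≤ nsq ((Pt - P)ᴴ *ᵥ x) := quadR_nsq P _
    have hdE := lemE x
    have hkey : (nsq x - nsq (Ptᴴ *ᵥ x)) - (nsq x - nsq (Pᴴ *ᵥ x)) ≤
        ε / 4 * ((1 + 2 * ε) * (nsq x - nsq (Ptᴴ *ᵥ x)) + quadR P (Ptᴴ *ᵥ x)) +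
        ε / 4 * ((1 + 2 * ε) * (nsq x - nsq (Ptᴴ *ᵥ x)) + quadR P (Pᴴ *ᵥ x)) := by
      have hqr1 : quadR P (Pᴴ *ᵥ x) = nsq (Pᴴ *ᵥ x) - nsq (P *ᵥ (Pᴴ *ᵥ x)) := rfl
      have hqr2 : quadR P (Ptᴴ *ᵥ x) = nsq (Ptᴴ *ᵥ x) - nsq (P *ᵥ (Ptᴴ *ᵥ x)) := rfl
      rw [hqr1, hqr2]
      linarith [e1, e2, hid]
    have hC' : quadR P (Pᴴ *ᵥ x) ≤ nsq x - nsq (Pᴴ *ᵥ x) := hC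
    exact arithF hε0 hε1 (M2 x) (M1 x)
      (arith2 hε0 hkey hpar hdq hdE hC')
  refine ⟨fun x => M2 x, fun y => M3 y, fun x y => ?_⟩
  have hql : quadL P x = nsq x - nsq (Pᴴ *ᵥ x) := rfl
  have hqr : quadR P y = nsq y - nsq (P *ᵥ y) := rfl
  rw [hql, hqr]
  exact arithMain hε0 hε1 (M2 x) (M3 y) (M1 x) (lemF x) (M4 x y)




lemma good_one (ε : ℝ) : Good ε (1 : Matrix (Fin n) (Fin n) ℂ) 1 := by
  refine ⟨fun x => ?_, fun y => ?_, fun x y => ?_⟩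
  · unfold quadL
    simp [Matrix.one_mulVec]
  · unfold quadR
    simp [Matrix.one_mulVec]
  · unfold quadL quadR
    simp [Matrix.one_mulVec, ip]

lemma ofFn_rev (M : ℕ → Matrix (Fin n) (Fin n) ℂ) :
    ∀ ℓ : ℕ, (List.ofFn fun i : Fin ℓ => M i.val).reverse.prod = pp M ℓ := by
  intro ℓ
  induction ℓ with
  | zero => simp [pp]
  | succ ℓ IH =>
    rw [List.ofFn_succ']
    simp only [List.concat_eq_append, List.reverse_append, List.reverse_cons,
      List.reverse_nil, List.nil_append, List.singleton_append, List.prod_cons]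
    have : (fun i : Fin ℓ => M (Fin.castSucc i).val) = fun i : Fin ℓ => M i.val := by
      funext i
      simp
    rw [this, IH]
    rfl

end SVAux

/-- there are constants `C > 0` and `ε₀ ∈ (0,1]` such that normalized-SV
approximation is preserved under arbitrary products, with error degrading from `ε`
only to `ε + C·ε²`. -/
theorem stmt_9 :
    ∃ C : ℝ, 0 < C ∧ ∃ ε₀ : ℝ, 0 < ε₀ ∧ ε₀ ≤ 1 ∧
      ∀ (n : ℕ), 1 ≤ n → ∀ (ℓ : ℕ), 1 ≤ ℓ → ∀ (ε : ℝ), 0 ≤ ε → ε ≤ ε₀ →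
        ∀ (N Ntil : Fin ℓ → Matrix (Fin n) (Fin n) ℂ),
          (∀ i, IsNSVApprox ε (N i) (Ntil i)) →
          IsNSVApprox (ε + C * ε ^ 2) (orderedProd N) (orderedProd Ntil) := by
  refine ⟨5, by norm_num, 1/10, by norm_num, by norm_num, ?_⟩
  intro n _hn ℓ _hℓ ε hε0 hε1 N Ntil hNSV
  classical
  set Nn : ℕ → Matrix (Fin n) (Fin n) ℂ :=
    fun k => if hk : k < ℓ then N ⟨k, hk⟩ else 1 with hNn
  set Ntn : ℕ → Matrix (Fin n) (Fin n) ℂ :=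
    fun k => if hk : k < ℓ then Ntil ⟨k, hk⟩ else 1 with hNtn
  have hGood : ∀ k, SVAux.Good ε (Nn k) (Ntn k) := by
    intro k
    by_cases hk : k < ℓ
    · simp only [hNn, hNtn, dif_pos hk]
      exact (SVAux.isNSV_iff_good ε _ _).mp (hNSV ⟨k, hk⟩)
    · simp only [hNn, hNtn, dif_neg hk]
      exact SVAux.good_one ε
  have hON : orderedProd N = SVAux.pp Nn ℓ := by
    have hfun : (fun i : Fin ℓ => Nn i.val) = N := by
      funext i
      simp [hNn, i.isLt]
    unfold orderedProd
    rw [← hfun]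
    exact SVAux.ofFn_rev Nn ℓ
  have hONt : orderedProd Ntil = SVAux.pp Ntn ℓ := by
    have hfun : (fun i : Fin ℓ => Ntn i.val) = Ntil := by
      funext i
      simp [hNtn, i.isLt]
    unfold orderedProd
    rw [← hfun]
    exact SVAux.ofFn_rev Ntn ℓ
  rw [hON, hONt]
  exact (SVAux.isNSV_iff_good _ _ _).mpr (SVAux.final hε0 hε1 Nn Ntn hGood ℓ)
end

section
/- For every α ∈ (0,1) and every ε ∈ (0,1), there exist symmetric matrices W, W̃ ∈ ℝ^{2×2} such that I − W·Wᵀ and I − W̃·W̃ᵀ are positive semidefinite (i.e. both have spectral norm at most 1), W̃ is a unit-circle ε-approximation of W with respect to degree matrix I, and yet for every ε′ ≥ 0 for which W̃ is an ε′-normalized-SV approximation of W, one has ε′ ≥ ε/√(1 − α²). (Explicitly, one may take W = diag(α, −α) and W̃ with diagonal entries α, −α and off-diagonal entries ε·√(1 − α²).) -/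
open Matrix ComplexOrder

/-- `Ã` is a unit-circle `ε`-approximation of `A` with respect to the degree matrix `I`:
for every unimodular `z`, `z·Ã` is a standard `ε`-approximation of `z·A` w.r.t. `I`. -/
noncomputable def IsUCApproxId {n : ℕ} (ε : ℝ) (A Atil : Matrix (Fin n) (Fin n) ℂ) : Prop :=
  ∀ z : ℂ, ‖z‖ = 1 →
    ((1 : Matrix (Fin n) (Fin n) ℂ) - symPart (z • A)).PosSemidef ∧
    ∀ x y : Fin n → ℂ,
      ‖star x ⬝ᵥ (z • Atil - z • A).mulVec y‖ ≤
        ε / 2 *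
          ((star x ⬝ᵥ ((1 : Matrix (Fin n) (Fin n) ℂ) - symPart (z • A)).mulVec x).re +
           (star y ⬝ᵥ ((1 : Matrix (Fin n) (Fin n) ℂ) - symPart (z • A)).mulVec y).re)

lemma my_amgm (P Q s a q : ℝ) (hP : 0 ≤ P) (hQ : 0 ≤ Q) (hs : 0 ≤ s)
    (ha : 0 ≤ a) (hq : 0 ≤ q) (hsq : s ^ 2 ≤ P * Q) :
    2 * (s * (a * q)) ≤ P * a ^ 2 + Q * q ^ 2 := by
  have h1 : s ≤ Real.sqrt (P * Q) := by
    rw [show P * Q = Real.sqrt (P*Q) ^ 2 by rw [Real.sq_sqrt (by positivity)]] at hsq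
    nlinarith [Real.sqrt_nonneg (P*Q)]
  have h2 : Real.sqrt (P * Q) = Real.sqrt P * Real.sqrt Q := Real.sqrt_mul hP Q
  have h3 := two_mul_le_add_sq (Real.sqrt P * a) (Real.sqrt Q * q)
  have hp2 : Real.sqrt P ^ 2 = P := Real.sq_sqrt hP
  have hq2 : Real.sqrt Q ^ 2 = Q := Real.sq_sqrt hQ
  nlinarith [mul_nonneg ha hq, Real.sqrt_nonneg P, Real.sqrt_nonneg Q]


set_option maxHeartbeats 1000000 in
/-- unit-circle approximation can be separated arbitrarily from
normalized-SV approximation, already for symmetric `2×2` real matrices of spectral norm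
at most `1`. -/
theorem stmt_10 (α ε : ℝ) (hα : 0 < α) (hα1 : α < 1) (hε : 0 < ε) (hε1 : ε < 1) :
    ∃ W Wtil : Matrix (Fin 2) (Fin 2) ℝ,
      Wᵀ = W ∧ Wtilᵀ = Wtil ∧
      ((1 : Matrix (Fin 2) (Fin 2) ℝ) - W * Wᵀ).PosSemidef ∧
      ((1 : Matrix (Fin 2) (Fin 2) ℝ) - Wtil * Wtilᵀ).PosSemidef ∧
      IsUCApproxId ε (W.map fun a => (a : ℂ)) (Wtil.map fun a => (a : ℂ)) ∧
      ∀ ε' : ℝ, 0 ≤ ε' →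
        IsNSVApprox ε' (W.map fun a => (a : ℂ)) (Wtil.map fun a => (a : ℂ)) →
        ε / Real.sqrt (1 - α ^ 2) ≤ ε' := by
  set s := Real.sqrt (1 - α ^ 2) with hs_def
  have hs2 : s ^ 2 = 1 - α ^ 2 := Real.sq_sqrt (by nlinarith)
  have hs0 : 0 < s := Real.sqrt_pos.mpr (by nlinarith)
  set c := ε * s with hc_def
  have hc0 : 0 < c := mul_pos hε hs0
  refine ⟨!![α,0;0,-α], !![α,c;c,-α], ?_, ?_, ?_, ?_, ?_, ?_⟩
  · ext i j; fin_cases i <;> fin_cases j <;> simp [Matrix.transpose_apply]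
  · ext i j; fin_cases i <;> fin_cases j <;> simp [Matrix.transpose_apply]
  · have h : (1 : Matrix (Fin 2) (Fin 2) ℝ) - !![α,0;0,-α] * !![α,0;0,-α]ᵀ
        = Matrix.diagonal ![1 - α^2, 1 - α^2] := by
      ext i j
      fin_cases i <;> fin_cases j <;>
        simp [Matrix.mul_apply, Fin.sum_univ_two, Matrix.diagonal, Matrix.one_apply,
          Matrix.transpose_apply, Matrix.vecHead, Matrix.vecTail, Matrix.vecMul, dotProduct] <;> ring
    rw [h, Matrix.posSemidef_diagonal_iff]
    intro i; fin_cases i <;> simpa using (by nlinarith : (0:ℝ) ≤ 1 - α ^ 2)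
  · have h : (1 : Matrix (Fin 2) (Fin 2) ℝ) - !![α,c;c,-α] * !![α,c;c,-α]ᵀ
        = Matrix.diagonal ![1 - α^2 - c^2, 1 - α^2 - c^2] := by
      ext i j
      fin_cases i <;> fin_cases j <;>
        simp [Matrix.mul_apply, Fin.sum_univ_two, Matrix.diagonal, Matrix.one_apply,
          Matrix.transpose_apply, Matrix.vecHead, Matrix.vecTail, Matrix.vecMul, dotProduct] <;> ring
    rw [h, Matrix.posSemidef_diagonal_iff]
    have hcc : c ^ 2 = ε^2 * (1 - α^2) := by rw [hc_def]; rw [mul_pow, hs2]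
    have hε2 : ε ^ 2 ≤ 1 := by nlinarith
    have h1a : 0 ≤ 1 - α ^ 2 := by nlinarith
    intro i; fin_cases i <;> simpa using (by nlinarith : (0:ℝ) ≤ 1 - α ^ 2 - c ^ 2)
  · -- UC approximation
    intro z hz
    set t := z.re with ht_def
    have htl := abs_le.mp (by simpa [hz] using Complex.abs_re_le_norm z)
    have hP : 0 ≤ 1 - t * α := by nlinarith [htl.1, htl.2]
    have hQ : 0 ≤ 1 + t * α := by nlinarith [htl.1, htl.2]
    have hsym : (1 : Matrix (Fin 2) (Fin 2) ℂ) -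
        symPart (z • ((!![α,0;0,-α] : Matrix (Fin 2) (Fin 2) ℝ).map fun a => (a:ℂ)))
        = Matrix.diagonal ![((1 - t*α : ℝ) : ℂ), ((1 + t*α : ℝ) : ℂ)] := by
      ext i j
      fin_cases i <;> fin_cases j <;>
        simp [symPart, Matrix.map_apply, Matrix.conjTranspose_apply, Matrix.diagonal,
          Matrix.one_apply] <;>
        · apply Complex.ext <;> simp <;> ring
    rw [hsym]
    constructor
    · rw [Matrix.posSemidef_diagonal_iff]
      intro i
      fin_cases i
      · simpa using (Complex.zero_le_real.mpr hP)
      · simpa using (Complex.zero_le_real.mpr hQ)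
    · intro x y
      have hL : star x ⬝ᵥ ((z • ((!![α,c;c,-α] : Matrix (Fin 2) (Fin 2) ℝ).map fun a => (a:ℂ))
            - z • ((!![α,0;0,-α] : Matrix (Fin 2) (Fin 2) ℝ).map fun a => (a:ℂ))).mulVec y)
          = z * ((c:ℂ) * (star (x 0) * y 1 + star (x 1) * y 0)) := by
        simp [Matrix.mulVec, dotProduct, Fin.sum_univ_two, Matrix.map_apply,
          Matrix.smul_apply]
        ring
      have hR : ∀ v : Fin 2 → ℂ,
          (star v ⬝ᵥ (Matrix.diagonal ![((1 - t*α : ℝ) : ℂ), ((1 + t*α : ℝ) : ℂ)]).mulVec v).re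
          = (1 - t*α) * ‖v 0‖ ^ 2 + (1 + t*α) * ‖v 1‖ ^ 2 := by
        intro v
        rw [Complex.sq_norm, Complex.sq_norm]
        simp [Matrix.mulVec, dotProduct, Fin.sum_univ_two, Matrix.diagonal,
          Complex.mul_re, Complex.normSq_apply]
        ring
      rw [hL, norm_mul, hz, one_mul, norm_mul, Complex.norm_of_nonneg hc0.le,
        hR x, hR y]
      set a := ‖x 0‖ with ha_def
      set b := ‖x 1‖ with hb_def
      set p := ‖y 0‖ with hp_def
      set q := ‖y 1‖ with hq_def
      have htri : ‖star (x 0) * y 1 + star (x 1) * y 0‖ ≤ a * q + b * p := by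
        calc ‖star (x 0) * y 1 + star (x 1) * y 0‖
            ≤ ‖star (x 0) * y 1‖ + ‖star (x 1) * y 0‖ :=
              norm_add_le _ _
          _ = a * q + b * p := by
              rw [norm_mul, norm_mul]
              simp [Complex.norm_conj, ha_def, hb_def, hp_def, hq_def]
      have ht1 : -1 ≤ t := htl.1
      have ht2 : t ≤ 1 := htl.2
      have hPQ : s ^ 2 ≤ (1 - t*α) * (1 + t*α) := by
        nlinarith [hs2, sq_nonneg α, mul_nonneg (by linarith : (0:ℝ) ≤ 1 - t)
          (by linarith : (0:ℝ) ≤ 1 + t)]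
      have h1 := my_amgm (1 - t*α) (1 + t*α) s a q hP hQ hs0.le
        (norm_nonneg _) (norm_nonneg _) hPQ
      have h2 := my_amgm (1 + t*α) (1 - t*α) s b p hQ hP hs0.le
        (norm_nonneg _) (norm_nonneg _) (by nlinarith [hPQ])
      have h3 : c * (a * q + b * p) ≤
          ε/2 * ((1 - t*α) * a^2 + (1 + t*α) * q^2 + (1 + t*α) * b^2 + (1 - t*α) * p^2) := by
        calc c * (a * q + b * p) = ε/2 * (2*(s*(a*q)) + 2*(s*(b*p))) := by rw [hc_def]; ring
          _ ≤ _ := by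
              apply mul_le_mul_of_nonneg_left (by linarith) (by positivity)
      have h4 := mul_le_mul_of_nonneg_left htri hc0.le
      nlinarith [h3, h4]
  · -- NSV lower bound
    intro ε' hε' hNSV
    have h := hNSV.2.2 ![1,0] ![0,1]
    have hL : star ![(1:ℂ),0] ⬝ᵥ ((((!![α,c;c,-α] : Matrix (Fin 2) (Fin 2) ℝ).map fun a => (a:ℂ))
          - ((!![α,0;0,-α] : Matrix (Fin 2) (Fin 2) ℝ).map fun a => (a:ℂ))).mulVec ![0,1])
        = (c:ℂ) := by
      simp [Matrix.mulVec, dotProduct, Fin.sum_univ_two, Matrix.map_apply]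
    rw [hL, Complex.norm_of_nonneg hc0.le] at h
    have hx : (star ![(1:ℂ),0] ⬝ᵥ ((1 : Matrix (Fin 2) (Fin 2) ℂ) -
        ((!![α,0;0,-α] : Matrix (Fin 2) (Fin 2) ℝ).map fun a => (a:ℂ)) *
        ((!![α,0;0,-α] : Matrix (Fin 2) (Fin 2) ℝ).map fun a => (a:ℂ))ᴴ).mulVec ![1,0]).re
        = 1 - α ^ 2 := by
      simp [Matrix.mulVec, dotProduct, Fin.sum_univ_two, Matrix.mul_apply,
        Matrix.conjTranspose_apply, Matrix.map_apply, Matrix.one_apply, Complex.mul_re,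
        Complex.sub_re]
      ring
    have hy : (star ![(0:ℂ),1] ⬝ᵥ ((1 : Matrix (Fin 2) (Fin 2) ℂ) -
        ((!![α,0;0,-α] : Matrix (Fin 2) (Fin 2) ℝ).map fun a => (a:ℂ))ᴴ *
        ((!![α,0;0,-α] : Matrix (Fin 2) (Fin 2) ℝ).map fun a => (a:ℂ))).mulVec ![0,1]).re
        = 1 - α ^ 2 := by
      simp [Matrix.mulVec, dotProduct, Fin.sum_univ_two, Matrix.mul_apply,
        Matrix.conjTranspose_apply, Matrix.map_apply, Matrix.one_apply, Complex.mul_re,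
        Complex.sub_re]
      ring
    rw [hx, hy] at h
    rw [div_le_iff₀ hs0]
    nlinarith [h, hs2, hs0, hε', mul_nonneg hε' (sq_nonneg s)]
end

section
/- Let n ≥ 1 and let W, W̃ ∈ ℝ^{n×n} be doubly stochastic matrices such that W̃ is an ε-normalized-SV approximation of W. Then for all subsets S, T ⊆ {1,…,n}: |Cut_{W̃}(S,T) − Cut_W(S,T)| ≤ (ε/2)·√(Cut_{WᵀW}(S) · Cut_{WWᵀ}(T)). -/
open Matrix ComplexOrder

/-- `Cut_M(S,T) := (1/n)·∑_{i∈S}∑_{j∈T} M_{j i}`. -/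
noncomputable def cut {n : ℕ} (M : Matrix (Fin n) (Fin n) ℝ) (S T : Finset (Fin n)) : ℝ :=
  (n : ℝ)⁻¹ * ∑ i ∈ S, ∑ j ∈ T, M j i

open Filter Topology in
private lemma opt_bound' {a b d ε : ℝ} (ha : 0 ≤ a) (hb : 0 ≤ b) (hε : 0 ≤ ε)
    (h : ∀ t : ℝ, 0 < t → d ≤ ε / 4 * (t ^ 2 * a + (t⁻¹) ^ 2 * b)) :
    d ≤ ε / 2 * Real.sqrt (a * b) := by
  have key : ∀ δ : ℝ, 0 < δ → d ≤ ε / 2 * Real.sqrt ((a + δ) * (b + δ)) := by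
    intro δ hδ
    have hA : 0 < a + δ := by linarith
    have hB : 0 < b + δ := by linarith
    set u : ℝ := Real.sqrt ((b + δ) / (a + δ)) with hu
    have hupos : 0 < u := Real.sqrt_pos.2 (div_pos hB hA)
    have ht : 0 < Real.sqrt u := Real.sqrt_pos.2 hupos
    have h1 : (Real.sqrt u) ^ 2 = u := Real.sq_sqrt hupos.le
    have h2 : ((Real.sqrt u)⁻¹) ^ 2 = u⁻¹ := by rw [inv_pow, h1]
    have huinv : u⁻¹ = Real.sqrt ((a + δ) / (b + δ)) := by
      rw [hu, ← Real.sqrt_inv, inv_div]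
    have e1 : u * (a + δ) = Real.sqrt ((a + δ) * (b + δ)) := by
      have h3 : Real.sqrt (a + δ) ≠ 0 := (Real.sqrt_pos.2 hA).ne'
      rw [hu, Real.sqrt_div hB.le, Real.sqrt_mul hA.le]
      field_simp
      linear_combination (-1) * Real.sq_sqrt hA.le
    have e2 : u⁻¹ * (b + δ) = Real.sqrt ((a + δ) * (b + δ)) := by
      have h3 : Real.sqrt (b + δ) ≠ 0 := (Real.sqrt_pos.2 hB).ne'
      rw [huinv, Real.sqrt_div hA.le, Real.sqrt_mul hA.le]
      field_simp
      linear_combination (-1) * Real.sq_sqrt hB.le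
    have hd := h (Real.sqrt u) ht
    rw [h1, h2] at hd
    have hmono : u * a + u⁻¹ * b ≤ u * (a + δ) + u⁻¹ * (b + δ) := by
      have := mul_le_mul_of_nonneg_left (by linarith : a ≤ a + δ) hupos.le
      have := mul_le_mul_of_nonneg_left (by linarith : b ≤ b + δ) (inv_pos.2 hupos).le
      nlinarith
    calc d ≤ ε / 4 * (u * a + u⁻¹ * b) := hd
      _ ≤ ε / 4 * (u * (a + δ) + u⁻¹ * (b + δ)) := by
          apply mul_le_mul_of_nonneg_left hmono (by linarith)
      _ = ε / 2 * Real.sqrt ((a + δ) * (b + δ)) := by rw [e1, e2]; ring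
  have tend : Tendsto (fun δ : ℝ => ε / 2 * Real.sqrt ((a + δ) * (b + δ))) (𝓝[>] 0)
      (𝓝 (ε / 2 * Real.sqrt (a * b))) := by
    have hc : Continuous (fun δ : ℝ => ε / 2 * Real.sqrt ((a + δ) * (b + δ))) := by
      continuity
    have := hc.tendsto 0
    simpa using this.mono_left nhdsWithin_le_nhds
  exact ge_of_tendsto tend (eventually_nhdsWithin_of_forall fun δ hδ => key δ hδ)

private lemma dot_ind' {n : ℕ} (M : Matrix (Fin n) (Fin n) ℂ) (T S : Finset (Fin n)) (t s : ℝ) :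
    star (fun i => if i ∈ T then (t:ℂ) else 0) ⬝ᵥ
      M.mulVec (fun i => if i ∈ S then (s:ℂ) else 0) =
    ((t*s:ℝ) : ℂ) * ∑ j ∈ T, ∑ i ∈ S, M j i := by
  simp only [dotProduct, mulVec, Pi.star_apply, apply_ite, star_zero, Complex.star_def,
    Complex.conj_ofReal, mul_ite, mul_zero, ite_mul, zero_mul, Finset.sum_ite_mem,
    Finset.univ_inter, Finset.sum_ite_irrel, Finset.sum_const_zero, Finset.mul_sum,
    Finset.sum_mul]
  push_cast
  apply Finset.sum_congr rfl; intro j _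
  apply Finset.sum_congr rfl; intro i _
  ring

/-- a normalized-SV approximation between doubly stochastic matrices
approximates all cut values `Cut(S,T)`, with error controlled by the cut values of the
forward-backward and backward-forward walks. -/
theorem stmt_11 {n : ℕ} (hn : 1 ≤ n) (W Wtil : Matrix (Fin n) (Fin n) ℝ)
    (hWnonneg : ∀ i j, 0 ≤ W i j)
    (hWrow : ∀ i, ∑ j, W i j = 1) (hWcol : ∀ j, ∑ i, W i j = 1)
    (hWtilnonneg : ∀ i j, 0 ≤ Wtil i j)
    (hWtilrow : ∀ i, ∑ j, Wtil i j = 1) (hWtilcol : ∀ j, ∑ i, Wtil i j = 1)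
    (ε : ℝ) (hε : 0 ≤ ε)
    (hNSV : IsNSVApprox ε (W.map fun a => (a : ℂ)) (Wtil.map fun a => (a : ℂ))) :
    ∀ S T : Finset (Fin n),
      |cut Wtil S T - cut W S T| ≤
        ε / 2 * Real.sqrt (cut (Wᵀ * W) S Sᶜ * cut (W * Wᵀ) T Tᶜ) := by
  intro S T
  obtain ⟨h1, h2, h3⟩ := hNSV
  have hnpos : (0:ℝ) < n := by exact_mod_cast hn
  -- matrix identities over ℂ
  have hsub : (Wtil.map fun a => (a:ℂ)) - (W.map fun a => (a:ℂ)) =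
      (Wtil - W).map (fun a => (a:ℂ)) := by
    ext i j; simp [Matrix.map_apply]
  have hAAH : (1 : Matrix (Fin n) (Fin n) ℂ) -
      (W.map fun a => (a:ℂ)) * (W.map fun a => (a:ℂ))ᴴ =
      ((1 : Matrix (Fin n) (Fin n) ℝ) - W * Wᵀ).map (fun a => (a:ℂ)) := by
    ext i j
    simp only [Matrix.sub_apply, Matrix.map_apply, Matrix.one_apply, Matrix.mul_apply,
      Matrix.conjTranspose_apply, Matrix.transpose_apply, Complex.star_def,
      Complex.conj_ofReal]
    push_cast
    split_ifs <;> simp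
  have hAHA : (1 : Matrix (Fin n) (Fin n) ℂ) -
      (W.map fun a => (a:ℂ))ᴴ * (W.map fun a => (a:ℂ)) =
      ((1 : Matrix (Fin n) (Fin n) ℝ) - Wᵀ * W).map (fun a => (a:ℂ)) := by
    ext i j
    simp only [Matrix.sub_apply, Matrix.map_apply, Matrix.one_apply, Matrix.mul_apply,
      Matrix.conjTranspose_apply, Matrix.transpose_apply, Complex.star_def,
      Complex.conj_ofReal]
    push_cast
    split_ifs <;> simp
  -- real quantities
  set D : ℝ := ∑ j ∈ T, ∑ i ∈ S, (Wtil - W) j i with hD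
  set QT : ℝ := ∑ j ∈ T, ∑ i ∈ T, ((1 : Matrix (Fin n) (Fin n) ℝ) - W * Wᵀ) j i with hQT
  set QS : ℝ := ∑ j ∈ S, ∑ i ∈ S, ((1 : Matrix (Fin n) (Fin n) ℝ) - Wᵀ * W) j i with hQS
  -- the key inequality from the NSV approximation, for all scalings t
  have hkey : ∀ t : ℝ, 0 < t → |D| ≤ ε / 4 * (t ^ 2 * QT + (t⁻¹) ^ 2 * QS) := by
    intro t htpos
    have := h3 (fun i => if i ∈ T then (t:ℂ) else 0) (fun i => if i ∈ S then ((t⁻¹:ℝ):ℂ) else 0)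
    rw [hsub, hAAH, hAHA, dot_ind', dot_ind', dot_ind'] at this
    have hts : t * t⁻¹ = 1 := mul_inv_cancel₀ htpos.ne'
    rw [hts] at this
    have hmapD : ∑ j ∈ T, ∑ i ∈ S, ((Wtil - W).map (fun a => (a:ℂ))) j i = ((D : ℝ) : ℂ) := by
      rw [hD]; push_cast [Matrix.map_apply]; rfl
    have hmapT : ∑ j ∈ T, ∑ i ∈ T,
        (((1 : Matrix (Fin n) (Fin n) ℝ) - W * Wᵀ).map (fun a => (a:ℂ))) j i = ((QT : ℝ) : ℂ) := by
      rw [hQT]; push_cast [Matrix.map_apply]; rfl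
    have hmapS : ∑ j ∈ S, ∑ i ∈ S,
        (((1 : Matrix (Fin n) (Fin n) ℝ) - Wᵀ * W).map (fun a => (a:ℂ))) j i = ((QS : ℝ) : ℂ) := by
      rw [hQS]; push_cast [Matrix.map_apply]; rfl
    rw [hmapD, hmapT, hmapS] at this
    simpa [Complex.norm_real, mul_pow, pow_two, mul_comm, mul_left_comm, mul_assoc] using this
  -- row sums of W * Wᵀ and Wᵀ * W are 1
  have hrowWWT : ∀ j, ∑ i, (W * Wᵀ) j i = 1 := by
    intro j
    simp only [Matrix.mul_apply, Matrix.transpose_apply]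
    rw [Finset.sum_comm]
    calc ∑ k, ∑ i, W j k * W i k = ∑ k, W j k * ∑ i, W i k := by
          simp [Finset.mul_sum]
      _ = 1 := by simp [hWcol, hWrow j]
  have hrowWTW : ∀ j, ∑ i, (Wᵀ * W) j i = 1 := by
    intro j
    simp only [Matrix.mul_apply, Matrix.transpose_apply]
    rw [Finset.sum_comm]
    calc ∑ k, ∑ i, W k j * W k i = ∑ k, W k j * ∑ i, W k i := by
          simp [Finset.mul_sum]
      _ = 1 := by simp [hWrow, hWcol j]
  -- symmetry
  have hsymWWT : ∀ i j, (W * Wᵀ) j i = (W * Wᵀ) i j := by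
    intro i j; simp only [Matrix.mul_apply, Matrix.transpose_apply]
    exact Finset.sum_congr rfl fun k _ => mul_comm _ _
  have hsymWTW : ∀ i j, (Wᵀ * W) j i = (Wᵀ * W) i j := by
    intro i j; simp only [Matrix.mul_apply, Matrix.transpose_apply]
    exact Finset.sum_congr rfl fun k _ => mul_comm _ _
  -- QT = n * cut (W*Wᵀ) T Tᶜ and QS = n * cut (Wᵀ*W) S Sᶜ
  have hQTcut : QT = n * cut (W * Wᵀ) T Tᶜ := by
    rw [hQT, cut]
    have : ∀ j ∈ T, ∑ i ∈ T, ((1 : Matrix (Fin n) (Fin n) ℝ) - W * Wᵀ) j i =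
        ∑ i ∈ Tᶜ, (W * Wᵀ) j i := by
      intro j hj
      have hsplit : ∑ i ∈ T, (W * Wᵀ) j i + ∑ i ∈ Tᶜ, (W * Wᵀ) j i = 1 := by
        rw [Finset.sum_add_sum_compl]; exact hrowWWT j
      have hone : ∑ i ∈ T, ((1 : Matrix (Fin n) (Fin n) ℝ)) j i = 1 := by
        simp [Matrix.one_apply, Finset.sum_ite_eq, hj]
      simp only [Matrix.sub_apply, Finset.sum_sub_distrib, hone]
      linarith
    rw [Finset.sum_congr rfl this]
    rw [← mul_assoc, mul_inv_cancel₀ hnpos.ne', one_mul]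
    rw [Finset.sum_comm]
    exact Finset.sum_comm.trans (Finset.sum_congr rfl fun x _ => Finset.sum_congr rfl fun y _ => hsymWWT _ _)
  have hQScut : QS = n * cut (Wᵀ * W) S Sᶜ := by
    rw [hQS, cut]
    have : ∀ j ∈ S, ∑ i ∈ S, ((1 : Matrix (Fin n) (Fin n) ℝ) - Wᵀ * W) j i =
        ∑ i ∈ Sᶜ, (Wᵀ * W) j i := by
      intro j hj
      have hsplit : ∑ i ∈ S, (Wᵀ * W) j i + ∑ i ∈ Sᶜ, (Wᵀ * W) j i = 1 := by
        rw [Finset.sum_add_sum_compl]; exact hrowWTW j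
      have hone : ∑ i ∈ S, ((1 : Matrix (Fin n) (Fin n) ℝ)) j i = 1 := by
        simp [Matrix.one_apply, Finset.sum_ite_eq, hj]
      simp only [Matrix.sub_apply, Finset.sum_sub_distrib, hone]
      linarith
    rw [Finset.sum_congr rfl this]
    rw [← mul_assoc, mul_inv_cancel₀ hnpos.ne', one_mul]
    rw [Finset.sum_comm]
    exact Finset.sum_comm.trans (Finset.sum_congr rfl fun x _ => Finset.sum_congr rfl fun y _ => hsymWTW _ _)
  -- nonnegativity of the cuts
  have hacut : 0 ≤ cut (Wᵀ * W) S Sᶜ := by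
    apply mul_nonneg (by positivity)
    apply Finset.sum_nonneg; intro i _
    apply Finset.sum_nonneg; intro j _
    simp only [Matrix.mul_apply, Matrix.transpose_apply]
    exact Finset.sum_nonneg fun k _ => mul_nonneg (hWnonneg _ _) (hWnonneg _ _)
  have hbcut : 0 ≤ cut (W * Wᵀ) T Tᶜ := by
    apply mul_nonneg (by positivity)
    apply Finset.sum_nonneg; intro i _
    apply Finset.sum_nonneg; intro j _
    simp only [Matrix.mul_apply, Matrix.transpose_apply]
    exact Finset.sum_nonneg fun k _ => mul_nonneg (hWnonneg _ _) (hWnonneg _ _)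
  -- relate the cut difference to D
  have hdiff : cut Wtil S T - cut W S T = (n:ℝ)⁻¹ * D := by
    rw [cut, cut, hD]
    simp only [Matrix.sub_apply, Finset.sum_sub_distrib]
    rw [← mul_sub]
    congr 1
    congr 1
    · exact Finset.sum_comm ..
    · exact Finset.sum_comm ..
  -- combine
  have hfinal : ∀ t : ℝ, 0 < t → |cut Wtil S T - cut W S T| ≤
      ε / 4 * (t ^ 2 * cut (W * Wᵀ) T Tᶜ + (t⁻¹) ^ 2 * cut (Wᵀ * W) S Sᶜ) := by
    intro t ht
    rw [hdiff, abs_mul, abs_of_nonneg (by positivity : (0:ℝ) ≤ (n:ℝ)⁻¹)]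
    have hk := hkey t ht
    rw [hQTcut, hQScut] at hk
    have h5 := mul_le_mul_of_nonneg_left hk (by positivity : (0:ℝ) ≤ (n:ℝ)⁻¹)
    refine h5.trans_eq ?_
    field_simp
  rw [mul_comm (cut (Wᵀ * W) S Sᶜ) (cut (W * Wᵀ) T Tᶜ)]
  exact opt_bound' hbcut hacut hε hfinal
end

section
/- Let A₁, A₂, A₃ ∈ ℂ^{m×n} and δ, ε ≥ 0. If A₃ is a δ-normalized-SV approximation of A₂ and A₂ is an ε-normalized-SV approximation of A₁, then A₃ is an (ε + δ + ε·δ)-normalized-SV approximation of A₁. Moreover, for every δ ∈ (0, 1/2) and every ℓ ≥ 1: if A₀, A₁, …, A_ℓ ∈ ℂ^{m×n} satisfy that Aᵢ is a (δ/(2ℓ))-normalized-SV approximation of A_{i−1} for every i ∈ {1,…,ℓ}, then A_ℓ is a δ-normalized-SV approximation of A₀. -/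
open Matrix ComplexOrder

set_option linter.unusedSectionVars false

namespace NSVAux

variable {α β γ : Type*} [Fintype α] [Fintype β] [Fintype γ]
variable [DecidableEq α] [DecidableEq β]

/-- squared norm as a real number -/
noncomputable def nsq (u : γ → ℂ) : ℝ := (star u ⬝ᵥ u).re

lemma nsq_nonneg (u : γ → ℂ) : 0 ≤ nsq u := by
  have h := dotProduct_star_self_nonneg u
  simpa [nsq] using (Complex.le_def.mp h).1

noncomputable def qL (A : Matrix α β ℂ) (x : α → ℂ) : ℝ :=
  (star x ⬝ᵥ ((1 : Matrix α α ℂ) - A * Aᴴ).mulVec x).re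

noncomputable def qR (A : Matrix α β ℂ) (y : β → ℂ) : ℝ :=
  (star y ⬝ᵥ ((1 : Matrix β β ℂ) - Aᴴ * A).mulVec y).re

lemma dot_ct_mul (N : Matrix γ α ℂ) (x : α → ℂ) :
    star x ⬝ᵥ (Nᴴ * N).mulVec x = star (N.mulVec x) ⬝ᵥ (N.mulVec x) := by
  rw [← mulVec_mulVec, dotProduct_mulVec, ← star_mulVec]

lemma qL_eq (A : Matrix α β ℂ) (x : α → ℂ) : qL A x = nsq x - nsq (Aᴴ.mulVec x) := by
  rw [qL, sub_mulVec, dotProduct_sub, one_mulVec,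
    show A * Aᴴ = Aᴴᴴ * Aᴴ by rw [conjTranspose_conjTranspose], dot_ct_mul]
  simp [nsq, Complex.sub_re]

lemma qR_eq (A : Matrix α β ℂ) (y : β → ℂ) : qR A y = nsq y - nsq (A.mulVec y) := by
  rw [qR, sub_mulVec, dotProduct_sub, one_mulVec, dot_ct_mul]
  simp [nsq, Complex.sub_re]

lemma qL_ct (A : Matrix α β ℂ) (y : β → ℂ) : qL Aᴴ y = qR A y := by
  rw [qL, qR, conjTranspose_conjTranspose]

lemma qR_ct (A : Matrix α β ℂ) (x : α → ℂ) : qR Aᴴ x = qL A x := by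
  rw [qL, qR, conjTranspose_conjTranspose]

/-- L1: `qR A (Aᴴx) ≤ qL A x`. -/
lemma qR_mulVec_le (A : Matrix α β ℂ) (x : α → ℂ) : qR A (Aᴴ.mulVec x) ≤ qL A x := by
  set P : Matrix α α ℂ := (1 : Matrix α α ℂ) - A * Aᴴ with hPdef
  have hP : Pᴴ = P := by
    simp [hPdef, conjTranspose_sub, conjTranspose_mul, conjTranspose_conjTranspose]
  have hPP : Pᴴ * P = 1 - A * Aᴴ - A * Aᴴ + (A * Aᴴ) * (A * Aᴴ) := by
    rw [hP, hPdef]; noncomm_ring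
  have h1 : star x ⬝ᵥ (Pᴴ * P).mulVec x = star (P.mulVec x) ⬝ᵥ (P.mulVec x) := dot_ct_mul P x
  have h2 : star x ⬝ᵥ ((A * Aᴴ) * (A * Aᴴ)).mulVec x
      = star ((A * Aᴴ).mulVec x) ⬝ᵥ ((A * Aᴴ).mulVec x) := by
    have hH : (A * Aᴴ)ᴴ = A * Aᴴ := by
      simp [conjTranspose_mul, conjTranspose_conjTranspose]
    rw [show (A * Aᴴ) * (A * Aᴴ) = (A * Aᴴ)ᴴ * (A * Aᴴ) by rw [hH]]
    exact dot_ct_mul _ x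
  have h3 : star x ⬝ᵥ (A * Aᴴ).mulVec x = star (Aᴴ.mulVec x) ⬝ᵥ (Aᴴ.mulVec x) := by
    rw [show A * Aᴴ = Aᴴᴴ * Aᴴ by rw [conjTranspose_conjTranspose]]
    exact dot_ct_mul _ x
  have hexp : star x ⬝ᵥ (Pᴴ * P).mulVec x
      = star x ⬝ᵥ x - star x ⬝ᵥ (A * Aᴴ).mulVec x - star x ⬝ᵥ (A * Aᴴ).mulVec x
        + star x ⬝ᵥ ((A * Aᴴ) * (A * Aᴴ)).mulVec x := by
    rw [hPP]; simp [sub_mulVec, add_mulVec, one_mulVec, dotProduct_sub, dotProduct_add]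
  have key : nsq (P.mulVec x)
      = nsq x - nsq (Aᴴ.mulVec x) - nsq (Aᴴ.mulVec x) + nsq ((A * Aᴴ).mulVec x) := by
    have := congrArg Complex.re (h1.symm.trans hexp)
    simpa [nsq, h3, h2, Complex.sub_re, Complex.add_re] using this
  have hnn := nsq_nonneg (P.mulVec x)
  have hqR : qR A (Aᴴ.mulVec x) = nsq (Aᴴ.mulVec x) - nsq ((A * Aᴴ).mulVec x) := by
    rw [qR_eq, mulVec_mulVec]
  rw [hqR, qL_eq]
  linarith [key, hnn]

lemma qL_nonneg {ε : ℝ} {A Atil : Matrix α β ℂ} (h : IsNSVApprox ε A Atil) (x : α → ℂ) :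
    0 ≤ qL A x := by
  have := h.1.re_dotProduct_nonneg x
  simpa [qL] using this

lemma qR_nonneg {ε : ℝ} {A Atil : Matrix α β ℂ} (h : IsNSVApprox ε A Atil) (y : β → ℂ) :
    0 ≤ qR A y := by
  have := h.2.1.re_dotProduct_nonneg y
  simpa [qR] using this

/-- the definitional bound, in `qL/qR` language -/
lemma bound {ε : ℝ} {A Atil : Matrix α β ℂ} (h : IsNSVApprox ε A Atil)
    (x : α → ℂ) (y : β → ℂ) :
    ‖star x ⬝ᵥ (Atil - A).mulVec y‖ ≤ ε / 4 * (qL A x + qR A y) :=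
  h.2.2 x y

/-- conjugate-flip of a dot product -/
lemma dot_ct_flip (M : Matrix α β ℂ) (x : α → ℂ) (y : β → ℂ) :
    star y ⬝ᵥ (Mᴴ.mulVec x) = star (star x ⬝ᵥ M.mulVec y) := by
  rw [dotProduct_mulVec, ← star_mulVec, star_dotProduct]

lemma flip {ε : ℝ} {A Atil : Matrix α β ℂ} (h : IsNSVApprox ε A Atil) :
    IsNSVApprox ε Aᴴ Atilᴴ := by
  obtain ⟨h1, h2, h3⟩ := h
  refine ⟨by simpa [conjTranspose_conjTranspose] using h2,
    by simpa [conjTranspose_conjTranspose] using h1, fun y x => ?_⟩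
  have habs : ‖star y ⬝ᵥ (Atilᴴ - Aᴴ).mulVec x‖
      = ‖star x ⬝ᵥ (Atil - A).mulVec y‖ := by
    rw [← conjTranspose_sub, dot_ct_flip]
    exact norm_star _
  have := h3 x y
  rw [habs]
  calc ‖star x ⬝ᵥ (Atil - A).mulVec y‖
      ≤ ε / 4 * ((star x ⬝ᵥ ((1 : Matrix α α ℂ) - A * Aᴴ).mulVec x).re +
        (star y ⬝ᵥ ((1 : Matrix β β ℂ) - Aᴴ * A).mulVec y).re) := this
    _ = _ := by rw [conjTranspose_conjTranspose]; ring

/-- core expansion identity -/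
lemma core (A E : Matrix α β ℂ) (x : α → ℂ) :
    nsq (Aᴴ.mulVec x) - nsq ((A + E)ᴴ.mulVec x)
      = -2 * (star x ⬝ᵥ E.mulVec (Aᴴ.mulVec x)).re - nsq (Eᴴ.mulVec x) := by
  set u := Aᴴ.mulVec x
  set w := Eᴴ.mulVec x
  have hsplit : (A + E)ᴴ.mulVec x = u + w := by
    rw [conjTranspose_add, add_mulVec]
  have hwu : star w ⬝ᵥ u = star x ⬝ᵥ E.mulVec u := by
    rw [show w = Eᴴ.mulVec x from rfl, star_mulVec, conjTranspose_conjTranspose,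
      ← dotProduct_mulVec]
  have huw : (star u ⬝ᵥ w).re = (star w ⬝ᵥ u).re := by
    rw [star_dotProduct]
    simp
  have hexp : star (u + w) ⬝ᵥ (u + w)
      = star u ⬝ᵥ u + star u ⬝ᵥ w + (star w ⬝ᵥ u + star w ⬝ᵥ w) := by
    rw [star_add, add_dotProduct, dotProduct_add, dotProduct_add]
  have := congrArg Complex.re hexp
  simp only [Complex.add_re] at this
  rw [hsplit]
  unfold nsq
  rw [this, huw, hwu]
  ring

/-- L2: quadratic form comparison on the left -/
lemma qL_le {ε : ℝ} (hε : 0 ≤ ε) {A Atil : Matrix α β ℂ} (h : IsNSVApprox ε A Atil)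
    (x : α → ℂ) : qL Atil x ≤ (1 + ε) * qL A x := by
  have hAE : A + (Atil - A) = Atil := by abel
  have hcore := core A (Atil - A) x
  rw [hAE] at hcore
  set φ := star x ⬝ᵥ (Atil - A).mulVec (Aᴴ.mulVec x) with hφ
  have hb := bound h x (Aᴴ.mulVec x)
  have hL1 := qR_mulVec_le A x
  have hre : -(‖φ‖) ≤ φ.re := (abs_le.mp (Complex.abs_re_le_norm φ)).1
  have hnn := nsq_nonneg ((Atil - A)ᴴ.mulVec x)
  have hq := qL_nonneg h x
  rw [qL_eq Atil, qL_eq A] at *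
  nlinarith [norm_nonneg φ]

lemma qR_le {ε : ℝ} (hε : 0 ≤ ε) {A Atil : Matrix α β ℂ} (h : IsNSVApprox ε A Atil)
    (y : β → ℂ) : qR Atil y ≤ (1 + ε) * qR A y := by
  have := qL_le hε (flip h) y
  rwa [qL_ct, qL_ct] at this

lemma mono {ε ε' : ℝ} {A Atil : Matrix α β ℂ} (h : IsNSVApprox ε A Atil) (hle : ε ≤ ε') :
    IsNSVApprox ε' A Atil := by
  obtain ⟨h1, h2, h3⟩ := h
  refine ⟨h1, h2, fun x y => (h3 x y).trans ?_⟩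
  have hx := h1.re_dotProduct_nonneg x
  have hy := h2.re_dotProduct_nonneg y
  simp only [RCLike.re_to_complex] at hx hy
  nlinarith

/-- approximate triangle inequality -/
lemma triangle {δ ε : ℝ} (hδ : 0 ≤ δ) (hε : 0 ≤ ε) {A₁ A₂ A₃ : Matrix α β ℂ}
    (h23 : IsNSVApprox δ A₂ A₃) (h12 : IsNSVApprox ε A₁ A₂) :
    IsNSVApprox (ε + δ + ε * δ) A₁ A₃ := by
  refine ⟨h12.1, h12.2.1, fun x y => ?_⟩
  have hsplit : (A₃ - A₁).mulVec y = (A₃ - A₂).mulVec y + (A₂ - A₁).mulVec y := by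
    rw [← add_mulVec, sub_add_sub_cancel]
  have htri : ‖star x ⬝ᵥ (A₃ - A₁).mulVec y‖
      ≤ ‖star x ⬝ᵥ (A₃ - A₂).mulVec y‖
        + ‖star x ⬝ᵥ (A₂ - A₁).mulVec y‖ := by
    rw [hsplit, dotProduct_add]
    exact norm_add_le _ _
  have h1 := bound h23 x y
  have h2 := bound h12 x y
  have hL := qL_le hε h12 x
  have hR := qR_le hε h12 y
  have hqL1 := qL_nonneg h12 x
  have hqR1 := qR_nonneg h12 y
  have goal : ‖star x ⬝ᵥ (A₃ - A₁).mulVec y‖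
      ≤ (ε + δ + ε * δ) / 4 * (qL A₁ x + qR A₁ y) := by nlinarith
  simpa [qL, qR] using goal

end NSVAux

/-- normalized-SV approximation satisfies an approximate triangle inequality,
and consequently a chain of `ℓ` many `(δ/(2ℓ))`-approximations yields a
`δ`-approximation. -/
theorem stmt_17 {m n : ℕ} :
    (∀ (A₁ A₂ A₃ : Matrix (Fin m) (Fin n) ℂ) (δ ε : ℝ), 0 ≤ δ → 0 ≤ ε →
      IsNSVApprox δ A₂ A₃ → IsNSVApprox ε A₁ A₂ →
      IsNSVApprox (ε + δ + ε * δ) A₁ A₃) ∧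
    (∀ δ : ℝ, 0 < δ → δ < 1 / 2 →
      ∀ ℓ : ℕ, 1 ≤ ℓ →
      ∀ B : Fin (ℓ + 1) → Matrix (Fin m) (Fin n) ℂ,
        (∀ i : Fin ℓ, IsNSVApprox (δ / (2 * ℓ)) (B i.castSucc) (B i.succ)) →
        IsNSVApprox δ (B 0) (B (Fin.last ℓ))) := by
  constructor
  · intro A₁ A₂ A₃ δ ε hδ hε h23 h12
    exact NSVAux.triangle hδ hε h23 h12
  · intro δ hδ0 hδhalf ℓ hℓ B hB
    set s : ℝ := δ / (2 * ℓ) with hs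
    have hℓ0 : (0:ℝ) < (ℓ:ℝ) := by exact_mod_cast hℓ
    have hs0 : 0 < s := by
      rw [hs]; positivity
    have hsℓ : 2 * (ℓ:ℝ) * s = δ := by
      rw [hs]; field_simp
    -- growth bound
    have hpow : ∀ k : ℕ, k ≤ ℓ → (1 + s) ^ k ≤ 1 + 2 * (k:ℝ) * s := by
      intro k hk
      induction k with
      | zero => norm_num
      | succ k ih =>
        have hk' : k ≤ ℓ := Nat.le_of_succ_le hk
        have h1 := ih hk'
        have hkR : (k:ℝ) ≤ (ℓ:ℝ) := by exact_mod_cast hk'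
        have hks : 2 * (k:ℝ) * s ≤ δ := by nlinarith
        have hpos : (0:ℝ) ≤ 1 + s := by linarith
        have hmul := mul_le_mul_of_nonneg_right h1 hpos
        have hrw : (1 + s) ^ (k + 1) = (1 + s) ^ k * (1 + s) := by ring
        push_cast
        nlinarith
    -- chain
    have main : ∀ k : ℕ, ∀ hk : k ≤ ℓ,
        IsNSVApprox ((1 + s) ^ k - 1) (B 0) (B ⟨k, Nat.lt_succ_of_le hk⟩) := by
      intro k
      induction k with
      | zero =>
        intro hk
        have hℓpos : 0 < ℓ := hℓ
        have h0 := hB ⟨0, hℓpos⟩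
        have hc : (⟨0, hℓpos⟩ : Fin ℓ).castSucc = (0 : Fin (ℓ + 1)) := by
          ext; simp
        rw [hc] at h0
        have he : (⟨0, Nat.lt_succ_of_le hk⟩ : Fin (ℓ + 1)) = 0 := by
          ext; simp
        rw [he]
        refine ⟨h0.1, h0.2.1, fun x y => ?_⟩
        simp
      | succ k ih =>
        intro hk
        have hk' : k < ℓ := hk
        have hkle : k ≤ ℓ := le_of_lt hk'
        have hstep := hB ⟨k, hk'⟩
        have hc1 : (⟨k, hk'⟩ : Fin ℓ).castSucc = (⟨k, Nat.lt_succ_of_le hkle⟩ : Fin (ℓ + 1)) := by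
          ext; simp
        have hc2 : (⟨k, hk'⟩ : Fin ℓ).succ = (⟨k + 1, Nat.lt_succ_of_le hk⟩ : Fin (ℓ + 1)) := by
          ext; simp
        rw [hc1, hc2] at hstep
        have hεk : 0 ≤ (1 + s) ^ k - 1 := by
          have := one_le_pow₀ (by linarith : (1:ℝ) ≤ 1 + s) (n := k)
          linarith
        have htri := NSVAux.triangle (le_of_lt hs0) hεk hstep (ih hkle)
        have heq : (1 + s) ^ k - 1 + s + ((1 + s) ^ k - 1) * s = (1 + s) ^ (k + 1) - 1 := by
          ring
        rwa [heq] at htri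
    have hlast := main ℓ le_rfl
    have hfin : (⟨ℓ, Nat.lt_succ_of_le le_rfl⟩ : Fin (ℓ + 1)) = Fin.last ℓ := rfl
    rw [hfin] at hlast
    refine NSVAux.mono hlast ?_
    have := hpow ℓ le_rfl
    linarith
end

section
/- Let V be a nonempty finite set, U ≥ 1 a real number, and A ∈ ℝ^{V×V} a matrix with every entry either 0 or lying in the interval [1, U]. Suppose A is strongly connected in the sense that for all i, j ∈ V there exists k ≥ 1 with (A^k)_{ij} > 0. Let d_i := ∑_j A_{ij} (so d_i > 0 for all i), and define the column-stochastic random-walk matrix W ∈ ℝ^{V×V} by W_{ji} := A_{ij}/d_i. Let π ∈ ℝ^V satisfy π_v > 0 for all v, ∑_v π_v = 1, and W·π = π, and let π_min := min_v π_v. Then for every ℓ ∈ ℕ and all subsets S, T ⊆ V with ∑_{v∈S} π_v + ∑_{v∈T} π_v ≥ 1, the quantity c := ∑_{j∈T} (W^ℓ · p)_j, where p ∈ ℝ^V is defined by p_v = π_v for v ∈ S and p_v = 0 otherwise, satisfies either c = 0 or c ≥ (π_min/(2U))³. -/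
open Matrix

private lemma stmt_19_path {V : Type*} [Fintype V] [DecidableEq V]
    (W : Matrix V V ℝ) :
    ∀ (m : ℕ) (i j : V), (W ^ m) j i ≠ 0 →
      ∃ v : ℕ → V, v 0 = i ∧ v m = j ∧ ∀ t < m, W (v (t + 1)) (v t) ≠ 0 := by
  intro m
  induction m with
  | zero =>
      intro i j hp
      have hji : j = i := by
        by_contra hne
        rw [pow_zero, Matrix.one_apply_ne hne] at hp
        exact hp rfl
      exact ⟨fun _ => i, rfl, by simp [hji], fun t ht => absurd ht (Nat.not_lt_zero t)⟩
  | succ m ih =>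
      intro i j hp
      rw [pow_succ', Matrix.mul_apply] at hp
      obtain ⟨w, -, hw⟩ := Finset.exists_ne_zero_of_sum_ne_zero hp
      have h1 : W j w ≠ 0 := fun h => hw (by rw [h, zero_mul])
      have h2 : (W ^ m) w i ≠ 0 := fun h => hw (by rw [h, mul_zero])
      obtain ⟨v, hv0, hvm, hve⟩ := ih i w h2
      refine ⟨fun t => if t = m + 1 then j else v t, ?_, ?_, ?_⟩
      · show (if 0 = m + 1 then j else v 0) = i
        rw [if_neg (by omega : ¬ 0 = m + 1), hv0]
      · show (if m + 1 = m + 1 then j else v (m + 1)) = j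
        rw [if_pos rfl]
      · intro t ht
        show W (if t + 1 = m + 1 then j else v (t + 1)) (if t = m + 1 then j else v t) ≠ 0
        by_cases htm : t = m
        · rw [if_pos (by omega : t + 1 = m + 1), if_neg (by omega : ¬ t = m + 1), htm, hvm]
          exact h1
        · rw [if_neg (by omega : ¬ t + 1 = m + 1), if_neg (by omega : ¬ t = m + 1)]
          exact hve t (by omega)

/-- for the random walk on a strongly connected weighted digraph with
weights in `{0} ∪ [1,U]`, the stationary probability mass that an `ℓ`-step walk starts
in `S` and ends in `T` (when `vol(S) + vol(T) ≥ 1`) is either `0` or at least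
`(π_min/(2U))³`. -/
theorem stmt_19 {V : Type*} [Fintype V] [DecidableEq V] [Nonempty V]
    (U : ℝ) (hU : 1 ≤ U)
    (A : Matrix V V ℝ)
    (hA : ∀ i j, A i j = 0 ∨ (1 ≤ A i j ∧ A i j ≤ U))
    (hconn : ∀ i j, ∃ k : ℕ, 1 ≤ k ∧ 0 < (A ^ k) i j)
    (d : V → ℝ) (hd : ∀ i, d i = ∑ j, A i j)
    (W : Matrix V V ℝ) (hW : ∀ i j, W j i = A i j / d i)
    (μ : V → ℝ) (hμpos : ∀ v, 0 < μ v) (hμsum : ∑ v, μ v = 1)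
    (hstat : W.mulVec μ = μ)
    (ℓ : ℕ) (S T : Finset V)
    (hvol : 1 ≤ (∑ v ∈ S, μ v) + ∑ v ∈ T, μ v) :
    (∑ j ∈ T, ((W ^ ℓ).mulVec fun v => if v ∈ S then μ v else 0) j) = 0 ∨
    ((Finset.univ.inf' Finset.univ_nonempty μ) / (2 * U)) ^ 3 ≤
      ∑ j ∈ T, ((W ^ ℓ).mulVec fun v => if v ∈ S then μ v else 0) j := by
  classical
  set πm := Finset.univ.inf' Finset.univ_nonempty μ with hπm
  set p : V → ℝ := fun v => if v ∈ S then μ v else 0 with hp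
  set c := ∑ j ∈ T, ((W ^ ℓ).mulVec p) j with hc
  set N : ℝ := (Fintype.card V : ℝ) with hN
  have hmv : ∀ (M : Matrix V V ℝ) (x : V → ℝ) (i : V), M.mulVec x i = ∑ u, M i u * x u :=
    fun M x i => rfl
  -- basic positivity facts about A, d, W
  have hA0 : ∀ i j, 0 ≤ A i j := by
    intro i j
    rcases hA i j with h | h
    · rw [h]
    · linarith [h.1]
  have hdpos : ∀ i, 0 < d i := by
    intro i
    obtain ⟨k, hk1, hk⟩ := hconn i i
    by_contra hle
    push_neg at hle
    have h2 : ∑ j, A i j = 0 :=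
      le_antisymm (by rw [← hd i]; exact hle) (Finset.sum_nonneg fun j _ => hA0 i j)
    have hz : ∀ j, A i j = 0 := fun j =>
      (Finset.sum_eq_zero_iff_of_nonneg (fun j _ => hA0 i j)).mp h2 j (Finset.mem_univ j)
    rcases k with _ | m
    · omega
    · rw [pow_succ', Matrix.mul_apply] at hk
      have : (∑ w, A i w * (A ^ m) w i) = 0 :=
        Finset.sum_eq_zero fun w _ => by rw [hz w, zero_mul]
      linarith
  have hN1 : (1 : ℝ) ≤ N := by
    rw [hN]
    exact_mod_cast Fintype.card_pos
  have hUN : 0 < U * N := by nlinarith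
  have hdU : ∀ i, d i ≤ U * N := by
    intro i
    rw [hd i]
    calc ∑ j, A i j ≤ ∑ _j : V, U := Finset.sum_le_sum fun j _ => by
          rcases hA i j with h | h
          · rw [h]; linarith
          · exact h.2
    _ = U * N := by rw [Finset.sum_const, nsmul_eq_mul, Finset.card_univ, hN, mul_comm]
  have hW0 : ∀ j i, 0 ≤ W j i := fun j i => by
    rw [hW i j]
    exact div_nonneg (hA0 i j) (hdpos i).le
  have hWlow : ∀ j i, W j i ≠ 0 → 1 / (U * N) ≤ W j i := by
    intro j i hne
    rw [hW i j] at hne ⊢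
    have hAne : A i j ≠ 0 := fun h => hne (by rw [h, zero_div])
    have hA1 : 1 ≤ A i j := by
      rcases hA i j with h | h
      · exact absurd h hAne
      · exact h.1
    exact div_le_div₀ (by linarith) hA1 (hdpos i) (hdU i)
  have hWcol : ∀ i, ∑ j, W j i = 1 := by
    intro i
    simp only [hW]
    rw [← Finset.sum_div, ← hd i, div_self (hdpos i).ne']
  have hWpow0 : ∀ (t : ℕ) (j i : V), 0 ≤ (W ^ t) j i := by
    intro t
    induction t with
    | zero =>
        intro j i
        rw [pow_zero, Matrix.one_apply]
        split <;> norm_num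
    | succ t ih =>
        intro j i
        rw [pow_succ, Matrix.mul_apply]
        exact Finset.sum_nonneg fun w _ => mul_nonneg (ih j w) (hW0 w i)
  have hWpowcol : ∀ (t : ℕ) (i : V), ∑ j, (W ^ t) j i = 1 := by
    intro t
    induction t with
    | zero => intro i; simp [Matrix.one_apply]
    | succ t ih =>
        intro i
        calc ∑ j, (W ^ (t + 1)) j i = ∑ j, ∑ w, (W ^ t) j w * W w i := by
              simp [pow_succ, Matrix.mul_apply]
        _ = ∑ w, ∑ j, (W ^ t) j w * W w i := Finset.sum_comm
        _ = ∑ w, (∑ j, (W ^ t) j w) * W w i := by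
              simp [Finset.sum_mul]
        _ = ∑ w, W w i := by simp [ih]
        _ = 1 := hWcol i
  -- stationarity of powers
  have hstatpow : ∀ t : ℕ, (W ^ t).mulVec μ = μ := by
    intro t
    induction t with
    | zero => rw [pow_zero, Matrix.one_mulVec]
    | succ t ih => rw [pow_succ', ← Matrix.mulVec_mulVec, ih, hstat]
  -- p bounds
  have hp0 : ∀ u, 0 ≤ p u := by
    intro u; rw [hp]; dsimp only; split
    · exact (hμpos u).le
    · rfl
  have hpμ : ∀ u, p u ≤ μ u := by
    intro u; rw [hp]; dsimp only; split
    · rfl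
    · exact (hμpos u).le
  -- ρ facts
  have hρ0' : ∀ (t : ℕ) (u : V), 0 ≤ (W ^ t).mulVec p u := by
    intro t u
    rw [hmv]
    exact Finset.sum_nonneg fun w _ => mul_nonneg (hWpow0 t u w) (hp0 w)
  have hρμ : ∀ (t : ℕ) (u : V), (W ^ t).mulVec p u ≤ μ u := by
    intro t u
    have h1 : (W ^ t).mulVec p u ≤ (W ^ t).mulVec μ u := by
      rw [hmv, hmv]
      exact Finset.sum_le_sum fun w _ =>
        mul_le_mul_of_nonneg_left (hpμ w) (hWpow0 t u w)
    rw [hstatpow t] at h1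
    exact h1
  have hρrec : ∀ t : ℕ, (W ^ (t + 1)).mulVec p = W.mulVec ((W ^ t).mulVec p) := by
    intro t
    rw [pow_succ', ← Matrix.mulVec_mulVec]
  -- H functions
  set H : ℕ → V → ℝ := fun s w => ∑ j ∈ T, (W ^ s) j w with hH
  have hH0 : ∀ w ∈ T, H 0 w = 1 := by
    intro w hw
    rw [hH]
    simp [Matrix.one_apply, Finset.sum_ite_eq, hw]
  have hHnn : ∀ s w, 0 ≤ H s w := by
    intro s w
    exact Finset.sum_nonneg fun j _ => hWpow0 s j w
  have hHle1 : ∀ s w, H s w ≤ 1 := by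
    intro s w
    calc H s w ≤ ∑ j, (W ^ s) j w :=
          Finset.sum_le_sum_of_subset_of_nonneg (Finset.subset_univ T)
            (fun j _ _ => hWpow0 s j w)
    _ = 1 := hWpowcol s w
  -- sum identities
  have hsumρ : ∀ t : ℕ, ∑ u, (W ^ t).mulVec p u = ∑ v ∈ S, μ v := by
    intro t
    have : ∑ u, (W ^ t).mulVec p u = ∑ w, (∑ u, (W ^ t) u w) * p w := by
      simp only [hmv]
      rw [Finset.sum_comm]
      simp [Finset.sum_mul]
    rw [this]
    simp only [hWpowcol, one_mul]
    rw [hp]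
    simp [Finset.sum_ite_mem]
  have hsumμH : ∀ s : ℕ, ∑ u, μ u * H s u = ∑ v ∈ T, μ v := by
    intro s
    simp only [hH]
    calc ∑ u, μ u * ∑ j ∈ T, (W ^ s) j u = ∑ u, ∑ j ∈ T, (W ^ s) j u * μ u := by
          congr 1; ext u; rw [Finset.mul_sum]; congr 1; ext j; ring
    _ = ∑ j ∈ T, ∑ u, (W ^ s) j u * μ u := Finset.sum_comm
    _ = ∑ j ∈ T, (W ^ s).mulVec μ j := by simp only [hmv]
    _ = ∑ j ∈ T, μ j := by rw [hstatpow s]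
  have hsumc : ∀ t : ℕ, t ≤ ℓ → ∑ u, (W ^ t).mulVec p u * H (ℓ - t) u = c := by
    intro t ht
    simp only [hH]
    calc ∑ u, (W ^ t).mulVec p u * ∑ j ∈ T, (W ^ (ℓ - t)) j u
        = ∑ u, ∑ j ∈ T, (W ^ (ℓ - t)) j u * (W ^ t).mulVec p u := by
          congr 1; ext u; rw [Finset.mul_sum]; congr 1; ext j; ring
    _ = ∑ j ∈ T, ∑ u, (W ^ (ℓ - t)) j u * (W ^ t).mulVec p u := Finset.sum_comm
    _ = ∑ j ∈ T, (W ^ (ℓ - t)).mulVec ((W ^ t).mulVec p) j := by simp only [hmv]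
    _ = ∑ j ∈ T, (W ^ ℓ).mulVec p j := by
          rw [Matrix.mulVec_mulVec, ← pow_add, Nat.sub_add_cancel ht]
    _ = c := hc.symm
  -- pointwise bounds
  have hpoint1 : ∀ t : ℕ, t ≤ ℓ → ∀ u : V, (W ^ t).mulVec p u * H (ℓ - t) u ≤ c := by
    intro t ht u
    rw [← hsumc t ht]
    exact Finset.single_le_sum
      (fun w _ => mul_nonneg (hρ0' t w) (hHnn (ℓ - t) w)) (Finset.mem_univ u)
  have hpoint2 : ∀ t : ℕ, t ≤ ℓ → ∀ u : V,
      (μ u - (W ^ t).mulVec p u) * (1 - H (ℓ - t) u) ≤ c := by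
    intro t ht u
    have hexp : ∑ w, (μ w - (W ^ t).mulVec p w) * (1 - H (ℓ - t) w)
        = (∑ w, μ w) - (∑ w, μ w * H (ℓ - t) w) - (∑ w, (W ^ t).mulVec p w)
          + ∑ w, (W ^ t).mulVec p w * H (ℓ - t) w := by
      rw [← Finset.sum_sub_distrib, ← Finset.sum_sub_distrib, ← Finset.sum_add_distrib]
      congr 1; ext w; ring
    have hsum : ∑ w, (μ w - (W ^ t).mulVec p w) * (1 - H (ℓ - t) w) ≤ c := by
      rw [hexp, hμsum, hsumμH, hsumρ, hsumc t ht]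
      linarith
    have hnn : ∀ w ∈ Finset.univ,
        0 ≤ (μ w - (W ^ t).mulVec p w) * (1 - H (ℓ - t) w) := fun w _ =>
      mul_nonneg (by linarith [hρμ t w]) (by linarith [hHle1 (ℓ - t) w])
    exact le_trans (Finset.single_le_sum hnn (Finset.mem_univ u)) hsum
  -- πm facts
  have hπmle : ∀ v, πm ≤ μ v := fun v => Finset.inf'_le μ (Finset.mem_univ v)
  have hπmpos : 0 < πm := by
    rw [hπm, Finset.lt_inf'_iff]
    exact fun v _ => hμpos v
  have hπmN : πm * N ≤ 1 := by
    have : ∑ _v : V, πm ≤ ∑ v, μ v := Finset.sum_le_sum fun v _ => hπmle v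
    rw [hμsum, Finset.sum_const, nsmul_eq_mul] at this
    rw [mul_comm]
    exact this
  have hπm1 : πm ≤ 1 := by nlinarith
  -- arithmetic keys
  have hU3 : (1 : ℝ) ≤ U ^ 3 := by nlinarith [sq_nonneg U, sq_nonneg (U - 1)]
  have hU3' : U ≤ U ^ 3 := by nlinarith [sq_nonneg (U - 1)]
  have hπsq : πm ^ 2 ≤ 1 := by nlinarith
  have hπ3 : πm ^ 3 ≤ πm := by nlinarith [hπsq, hπmpos]
  have hπU3 : πm * 1 ≤ πm * U ^ 3 := mul_le_mul_of_nonneg_left hU3 hπmpos.le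
  have key1 : (πm / (2 * U)) ^ 3 ≤ πm / (4 * (U * N)) := by
    rw [div_pow, div_le_div_iff₀ (by positivity) (by positivity)]
    have h1 : πm ^ 2 * N ≤ 1 := by nlinarith
    have h2 : πm ^ 3 * (4 * (U * N)) = 4 * U * πm * (πm ^ 2 * N) := by ring
    have h3 : 4 * U * πm * (πm ^ 2 * N) ≤ 4 * U * πm * 1 :=
      mul_le_mul_of_nonneg_left h1 (by positivity)
    have h4 : πm * U ≤ πm * U ^ 3 := mul_le_mul_of_nonneg_left hU3' hπmpos.le
    have h5 : πm * (2 * U) ^ 3 = 8 * (πm * U ^ 3) := by ring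
    nlinarith
  have key2 : (πm / (2 * U)) ^ 3 ≤ πm / 2 := by
    rw [div_pow, div_le_div_iff₀ (by positivity) (by norm_num)]
    have h5 : πm * (2 * U) ^ 3 = 8 * (πm * U ^ 3) := by ring
    nlinarith
  have key3 : (πm / (2 * U)) ^ 3 ≤ πm / 4 := by
    rw [div_pow, div_le_div_iff₀ (by positivity) (by norm_num)]
    have h5 : πm * (2 * U) ^ 3 = 8 * (πm * U ^ 3) := by ring
    nlinarith
  -- main argument
  have hcnn : 0 ≤ c := Finset.sum_nonneg fun j _ => hρ0' ℓ j
  by_cases hc0 : c = 0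
  · exact Or.inl hc0
  right
  by_contra hlt
  push_neg at hlt
  -- extract a positive path from S to T
  obtain ⟨j0, hj0T, hj0⟩ := Finset.exists_ne_zero_of_sum_ne_zero (hc ▸ hc0)
  have hj0' : ∑ u, (W ^ ℓ) j0 u * p u ≠ 0 := by rwa [← hmv]
  obtain ⟨i0, -, hi0⟩ := Finset.exists_ne_zero_of_sum_ne_zero hj0'
  have hWl : (W ^ ℓ) j0 i0 ≠ 0 := fun h => hi0 (by rw [h, zero_mul])
  have hpi0 : p i0 ≠ 0 := fun h => hi0 (by rw [h, mul_zero])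
  have hi0S : i0 ∈ S := by
    by_contra hne
    exact hpi0 (by rw [hp]; simp [hne])
  obtain ⟨v, hv0, hvl, hedge⟩ := stmt_19_path W ℓ i0 j0 hWl
  -- induction along the path
  have main : ∀ t : ℕ, t ≤ ℓ → μ (v t) / 2 < (W ^ t).mulVec p (v t) := by
    intro t
    induction t with
    | zero =>
        intro _
        have : (W ^ 0).mulVec p (v 0) = μ i0 := by
          rw [pow_zero, Matrix.one_mulVec, hv0, hp]
          simp [hi0S]
        rw [this, hv0]
        linarith [hμpos i0]
    | succ t ih =>
        intro hta
        have ht : t < ℓ := Nat.lt_of_succ_le hta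
        have iht := ih ht.le
        have hedge_t := hedge t ht
        have hWedge : 1 / (U * N) ≤ W (v (t + 1)) (v t) := hWlow _ _ hedge_t
        have hρstep : W (v (t + 1)) (v t) * (W ^ t).mulVec p (v t)
            ≤ (W ^ (t + 1)).mulVec p (v (t + 1)) := by
          rw [hρrec t, hmv]
          exact Finset.single_le_sum
            (f := fun u => W (v (t + 1)) u * (W ^ t).mulVec p u)
            (fun u _ => mul_nonneg (hW0 _ _) (hρ0' t u)) (Finset.mem_univ (v t))
        have hρlow : πm / (2 * (U * N)) < (W ^ (t + 1)).mulVec p (v (t + 1)) := by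
          have e1 : πm / (2 * (U * N)) = 1 / (U * N) * (πm / 2) := by ring
          have e2 : (1 : ℝ) / (U * N) * (πm / 2) ≤ 1 / (U * N) * (μ (v t) / 2) := by
            have := hπmle (v t)
            apply mul_le_mul_of_nonneg_left (by linarith) (by positivity)
          have e3 : (1 : ℝ) / (U * N) * (μ (v t) / 2) < 1 / (U * N) * ((W ^ t).mulVec p (v t)) :=
            mul_lt_mul_of_pos_left iht (by positivity)
          have e4 : (1 : ℝ) / (U * N) * ((W ^ t).mulVec p (v t))
              ≤ W (v (t + 1)) (v t) * (W ^ t).mulVec p (v t) :=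
            mul_le_mul_of_nonneg_right hWedge (hρ0' t (v t))
          linarith
        by_cases hHbig : 1 / 2 < H (ℓ - (t + 1)) (v (t + 1))
        · exfalso
          have hb := hpoint1 (t + 1) hta (v (t + 1))
          have hc2 : πm / (4 * (U * N)) < c := by
            have e1 : πm / (4 * (U * N)) = πm / (2 * (U * N)) * (1 / 2) := by ring
            have e2 : πm / (2 * (U * N)) * (1 / 2)
                < (W ^ (t + 1)).mulVec p (v (t + 1)) * H (ℓ - (t + 1)) (v (t + 1)) := by
              apply mul_lt_mul'' hρlow hHbig (by positivity) (by norm_num)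
            linarith
          linarith
        · push_neg at hHbig
          have hcross := hpoint2 (t + 1) hta (v (t + 1))
          have h2 : μ (v (t + 1)) - (W ^ (t + 1)).mulVec p (v (t + 1)) ≤ 2 * c := by
            have hmm : 0 ≤ μ (v (t + 1)) - (W ^ (t + 1)).mulVec p (v (t + 1)) := by
              linarith [hρμ (t + 1) (v (t + 1))]
            have hstep : (μ (v (t + 1)) - (W ^ (t + 1)).mulVec p (v (t + 1))) * (1 / 2)
                ≤ (μ (v (t + 1)) - (W ^ (t + 1)).mulVec p (v (t + 1)))
                  * (1 - H (ℓ - (t + 1)) (v (t + 1))) :=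
              mul_le_mul_of_nonneg_left (by linarith) hmm
            linarith
          have := hπmle (v (t + 1))
          linarith
  have hfin := main ℓ le_rfl
  have hT : v ℓ ∈ T := hvl ▸ hj0T
  have hle : (W ^ ℓ).mulVec p (v ℓ) ≤ c := by
    rw [hc]
    exact Finset.single_le_sum (fun j _ => hρ0' ℓ j) hT
  have := hπmle (v ℓ)
  linarith
end
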